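/- arXiv:1712.06239 — 5 statements merged into one kernel-verified Lean document; each statement's English description precedes it below -/
import Mathlib

section
/- Let F be a finite set of polynomials in C[x_1,...,x_n] and H_X = {x_1^2 - x_1, ..., x_n^2 - x_n}. Then the ideal generated by F ∪ H_X in C[x_1,...,x_n] is equal to the intersection over all Boolean points a = (a_1,...,a_n) ∈ {0,1}^n of the ideals (F) + (x_1 - a_1, ..., x_n - a_n); in particular, the ideal (F, H_X) is a radical ideal. -/
open MvPolynomial

namespace BoolIdealAux

variable {n : ℕ}

/-- literal polynomial -/
noncomputable def lit (b : Bool) (i : Fin n) : MvPolynomial (Fin n) ℂ :=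
  if b then X i else 1 - X i

/-- indicator polynomial of a boolean point -/
noncomputable def eb (b : Fin n → Bool) : MvPolynomial (Fin n) ℂ :=
  ∏ i, lit (b i) i

/-- boolean point as a complex point -/
def av (b : Fin n → Bool) : Fin n → ℂ := fun i => if b i then 1 else 0

lemma av_boolean (b : Fin n → Bool) : ∀ i, av b i = 0 ∨ av b i = 1 := by
  intro i; unfold av; cases b i <;> simp

lemma sum_eb : ∑ b : Fin n → Bool, eb (n := n) b = 1 := by
  classical
  have h := Finset.prod_univ_sum (fun _ : Fin n => (Finset.univ : Finset Bool))
    (fun i t => lit t i)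
  rw [Fintype.piFinset_univ] at h
  have h1 : ∀ i : Fin n, ∑ t : Bool, lit t i = 1 := by
    intro i
    rw [Fintype.sum_bool]
    simp [lit]
  rw [Finset.prod_congr rfl (fun i _ => h1 i)] at h
  simpa [eb] using h.symm

lemma mem_span_sub (a : Fin n → ℂ) (p : MvPolynomial (Fin n) ℂ) :
    p - C (eval a p) ∈ Ideal.span (Set.range fun i : Fin n => X i - C (a i)) := by
  induction p using MvPolynomial.induction_on with
  | C c => simp
  | add p q hp hq =>
      have : p + q - C (eval a (p + q)) = (p - C (eval a p)) + (q - C (eval a q)) := by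
        rw [map_add, map_add]; ring
      rw [this]; exact Ideal.add_mem _ hp hq
  | mul_X p i hp =>
      have : p * X i - C (eval a (p * X i)) =
          p * (X i - C (a i)) + C (a i) * (p - C (eval a p)) := by
        rw [map_mul, eval_X, map_mul]; ring
      rw [this]
      exact Ideal.add_mem _
        (Ideal.mul_mem_left _ _ (Ideal.subset_span ⟨i, rfl⟩))
        (Ideal.mul_mem_left _ _ hp)

lemma span_eq_vanishingIdeal (a : Fin n → ℂ) :
    Ideal.span (Set.range fun i : Fin n => X i - C (a i)) =
      MvPolynomial.vanishingIdeal ℂ {a} := by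
  apply le_antisymm
  · rw [Ideal.span_le]
    rintro _ ⟨i, rfl⟩
    rw [SetLike.mem_coe, mem_vanishingIdeal_singleton_iff]
    simp
  · intro p hp
    rw [mem_vanishingIdeal_singleton_iff] at hp
    change eval a p = 0 at hp
    have := mem_span_sub a p
    rwa [hp, map_zero, sub_zero] at this

lemma comp_radical (a : Fin n → ℂ) (F : Finset (MvPolynomial (Fin n) ℂ)) :
    (Ideal.span (F : Set (MvPolynomial (Fin n) ℂ)) ⊔
      Ideal.span (Set.range fun i : Fin n => X i - C (a i))).IsRadical := by
  rw [span_eq_vanishingIdeal]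
  have hm : (MvPolynomial.vanishingIdeal ℂ {a} : Ideal (MvPolynomial (Fin n) ℂ)).IsMaximal :=
    inferInstance
  by_cases h : Ideal.span (F : Set (MvPolynomial (Fin n) ℂ)) ⊔
      MvPolynomial.vanishingIdeal ℂ {a} = ⊤
  · rw [h]
    exact Ideal.radical_eq_iff.mp (Ideal.radical_top _)
  · have := hm.eq_of_le h le_sup_right
    rw [← this]
    exact hm.isPrime.isRadical

end BoolIdealAux

open BoolIdealAux

/-- The ideal generated by `F ∪ {x_i^2 - x_i}` equals the intersection over all Boolean
points `a ∈ {0,1}^n` of the ideals `(F) + (x_1 - a_1, ..., x_n - a_n)`; in particular it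
is a radical ideal. -/
theorem ideal_with_field_equations_eq_inter_max_ideals
    (n : ℕ) (F : Finset (MvPolynomial (Fin n) ℂ)) :
    (Ideal.span ((F : Set (MvPolynomial (Fin n) ℂ)) ∪
        {p : MvPolynomial (Fin n) ℂ | ∃ i : Fin n, p = X i ^ 2 - X i})
      = ⨅ a ∈ {a : Fin n → ℂ | ∀ i, a i = 0 ∨ a i = 1},
          Ideal.span (F : Set (MvPolynomial (Fin n) ℂ)) ⊔
            Ideal.span (Set.range fun i : Fin n => X i - C (a i))) ∧
    (Ideal.span ((F : Set (MvPolynomial (Fin n) ℂ)) ∪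
        {p : MvPolynomial (Fin n) ℂ | ∃ i : Fin n, p = X i ^ 2 - X i})).IsRadical := by
  classical
  set I : Ideal (MvPolynomial (Fin n) ℂ) :=
    Ideal.span ((F : Set (MvPolynomial (Fin n) ℂ)) ∪
      {p : MvPolynomial (Fin n) ℂ | ∃ i : Fin n, p = X i ^ 2 - X i}) with hI
  have hXsq : ∀ i : Fin n, (X i ^ 2 - X i : MvPolynomial (Fin n) ℂ) ∈ I :=
    fun i => Ideal.subset_span (Or.inr ⟨i, rfl⟩)
  have hFI : Ideal.span (F : Set (MvPolynomial (Fin n) ℂ)) ≤ I :=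
    Ideal.span_mono Set.subset_union_left
  have hEq : I = ⨅ a ∈ {a : Fin n → ℂ | ∀ i, a i = 0 ∨ a i = 1},
      Ideal.span (F : Set (MvPolynomial (Fin n) ℂ)) ⊔
        Ideal.span (Set.range fun i : Fin n => X i - C (a i)) := by
    apply le_antisymm
    · refine le_iInf fun a => le_iInf fun ha => ?_
      rw [hI, Ideal.span_le]
      rintro p (hp | ⟨i, rfl⟩)
      · exact Ideal.mem_sup_left (Ideal.subset_span hp)
      · have key : (X i ^ 2 - X i : MvPolynomial (Fin n) ℂ) =
            (X i - C (a i)) * (X i + C (a i) - 1) := by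
          rcases ha i with h | h <;> simp only [h, map_zero, map_one] <;> ring
        rw [key]
        exact Ideal.mem_sup_right (Ideal.mul_mem_right _ _ (Ideal.subset_span ⟨i, rfl⟩))
    · intro p hp
      have hpa : ∀ b : Fin n → Bool,
          p ∈ Ideal.span (F : Set (MvPolynomial (Fin n) ℂ)) ⊔
            Ideal.span (Set.range fun i : Fin n => X i - C (av b i)) := by
        intro b
        have h1 := (Submodule.mem_iInf _).mp hp (av b)
        exact (Submodule.mem_iInf _).mp h1 (av_boolean b)
      have hdecomp : p = ∑ b : Fin n → Bool, eb b * p := by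
        rw [← Finset.sum_mul, sum_eb, one_mul]
      rw [hdecomp]
      refine Ideal.sum_mem _ fun b _ => ?_
      obtain ⟨f, hf, m, hm, rfl⟩ := Submodule.mem_sup.mp (hpa b)
      rw [mul_add]
      refine Ideal.add_mem _ (Ideal.mul_mem_left _ _ (hFI hf)) ?_
      refine Submodule.span_induction (p := fun m _ => eb b * m ∈ I) ?_ ?_ ?_ ?_ hm
      · rintro _ ⟨i, rfl⟩
        have hsplit : eb b = lit (b i) i * ∏ j ∈ Finset.univ.erase i, lit (b j) j :=
          (Finset.mul_prod_erase Finset.univ _ (Finset.mem_univ i)).symm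
        have key : lit (b i) i * (X i - C (av b i)) =
            (if b i then 1 else -1) * (X i ^ 2 - X i) := by
          cases h : b i <;> simp [lit, av, h] <;> ring
        have : eb b * (X i - C (av b i)) =
            (∏ j ∈ Finset.univ.erase i, lit (b j) j) *
              ((if b i then 1 else -1) * (X i ^ 2 - X i)) := by
          rw [hsplit, ← key]; ring
        rw [this]
        exact Ideal.mul_mem_left _ _ (Ideal.mul_mem_left _ _ (hXsq i))
      · simp
      · intro x y _ _ hx hy
        rw [mul_add]; exact Ideal.add_mem _ hx hy
      · intro r x _ hx
        rw [smul_eq_mul, mul_left_comm]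
        exact Ideal.mul_mem_left _ _ hx
  refine ⟨hEq, ?_⟩
  rw [hEq]
  exact Ideal.isRadical_iInf _ fun a => Ideal.isRadical_iInf _ fun _ => comp_radical a F
end

section
/- Let F be a finite set of polynomials in C[x_1,...,x_n], H_X = {x_1^2 - x_1,...,x_n^2 - x_n}, and F_B the exponent-reduced version of F (all x_i^m replaced by x_i). Then the complete solving degree of F_B ∪ H_X is at most 3n. -/
open MvPolynomial

/-- Degree reverse lexicographic order (for `x_1 > ⋯ > x_n`): `a < b` iff `a` has smaller
total degree, or degrees are equal and at the largest index where they differ, `a` has the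
larger exponent. -/
def DrlLt {n : ℕ} (a b : Fin n →₀ ℕ) : Prop :=
  (∑ i, a i) < (∑ i, b i) ∨
    ((∑ i, a i) = (∑ i, b i) ∧
      ∃ i : Fin n, b i < a i ∧ ∀ j : Fin n, i < j → a j = b j)

/-- `m` is the leading monomial of `f` with respect to the DRL ordering. -/
def IsLeadingMonomial {n : ℕ} (f : MvPolynomial (Fin n) ℂ) (m : Fin n →₀ ℕ) : Prop :=
  m ∈ f.support ∧ ∀ m' ∈ f.support, m' ≠ m → DrlLt m' m

/-- `G` is a Gröbner basis of the ideal `I` with respect to the DRL ordering. -/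
def IsGB {n : ℕ} (I : Ideal (MvPolynomial (Fin n) ℂ))
    (G : Finset (MvPolynomial (Fin n) ℂ)) : Prop :=
  (G : Set (MvPolynomial (Fin n) ℂ)) ⊆ I ∧
  Ideal.span (G : Set (MvPolynomial (Fin n) ℂ)) = I ∧
  ∀ f ∈ I, f ≠ (0 : MvPolynomial (Fin n) ℂ) →
    ∃ g ∈ G, ∃ mg mf : Fin n →₀ ℕ,
      IsLeadingMonomial g mg ∧ IsLeadingMonomial f mf ∧ ∀ i, mg i ≤ mf i

/-- `G` is the reduced Gröbner basis of `I` for the DRL ordering: a Gröbner basis whose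
elements are monic and no monomial of an element is divisible by the leading monomial of
another element. -/
def IsReducedGB {n : ℕ} (I : Ideal (MvPolynomial (Fin n) ℂ))
    (G : Finset (MvPolynomial (Fin n) ℂ)) : Prop :=
  IsGB I G ∧
  ∀ g ∈ G, ∃ mg : Fin n →₀ ℕ, IsLeadingMonomial g mg ∧ g.coeff mg = 1 ∧
    ∀ m ∈ g.support, ∀ g' ∈ G, g' ≠ g → ∀ mg' : Fin n →₀ ℕ,
      IsLeadingMonomial g' mg' → ¬ ∀ i, mg' i ≤ m i

/-- `F_B`: reduce every exponent in `f` to at most `1`. -/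
noncomputable def squarefreePart {n : ℕ} (f : MvPolynomial (Fin n) ℂ) :
    MvPolynomial (Fin n) ℂ :=
  ∑ m ∈ f.support,
    monomial (Finsupp.mapRange (fun e => min e 1) (by decide) m) (f.coeff m)

namespace CSDaux
open Finset
variable {n : ℕ}
local notation "R'" => MvPolynomial (Fin n) ℂ

lemma pow_red (i : Fin n) (k : ℕ) :
    ∃ q : R', X i ^ k - X i ^ (min k 1) = q * (X i ^ 2 - X i) := by
  induction k with
  | zero => exact ⟨0, by simp⟩
  | succ k ih =>
    match k, ih with
    | 0, _ => exact ⟨0, by simp⟩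
    | (j+1), ⟨q, hq⟩ =>
      refine ⟨X i ^ j + q, ?_⟩
      have h1 : min (j+1) 1 = 1 := by omega
      have h2 : min (j+1+1) 1 = 1 := by omega
      rw [h1] at hq
      rw [h2]
      linear_combination hq

lemma telescope (s : Finset (Fin n)) (A B g : Fin n → R') (dA dB : Fin n → ℕ)
    (hA : ∀ i ∈ s, (A i).totalDegree ≤ dA i) (hB : ∀ i ∈ s, (B i).totalDegree ≤ dB i)
    (hq : ∀ i ∈ s, ∃ q, A i - B i = q * g i) :
    ∃ c : Fin n → R',
      (∏ i ∈ s, A i) - (∏ i ∈ s, B i) = ∑ i ∈ s, c i * g i ∧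
      ∀ i ∈ s, (c i * g i).totalDegree ≤ ∑ j ∈ s, max (dA j) (dB j) := by
  classical
  induction s using Finset.induction_on with
  | empty => exact ⟨0, by simp, by simp⟩
  | @insert a s ha ih =>
    obtain ⟨c, hc, hcd⟩ := ih (fun i hi => hA i (mem_insert_of_mem hi))
      (fun i hi => hB i (mem_insert_of_mem hi)) (fun i hi => hq i (mem_insert_of_mem hi))
    obtain ⟨qa, hqa⟩ := hq a (mem_insert_self a s)
    refine ⟨Function.update (fun i => B a * c i) a (qa * ∏ i ∈ s, A i), ?_, ?_⟩
    · rw [Finset.prod_insert ha, Finset.prod_insert ha, Finset.sum_insert ha,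
        Function.update_self,
        Finset.sum_congr rfl (fun i hi => by
          rw [Function.update_of_ne (ne_of_mem_of_not_mem hi ha)])]
      have h2 : ∑ i ∈ s, (B a * c i) * g i = B a * ∑ i ∈ s, c i * g i := by
        rw [Finset.mul_sum]; exact Finset.sum_congr rfl fun i _ => by ring
      rw [h2, ← hc]
      linear_combination (∏ i ∈ s, A i) * hqa
    · intro i hi
      rcases Finset.mem_insert.mp hi with rfl | hi'
      · rw [Function.update_self]
        have he : (qa * ∏ j ∈ s, A j) * (g i) = (A i - B i) * ∏ j ∈ s, A j := by
          rw [hqa]; ring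
        rw [he, Finset.sum_insert ha]
        refine (totalDegree_mul _ _).trans (add_le_add ?_ ?_)
        · exact (totalDegree_sub _ _).trans
            (max_le_max (hA i (mem_insert_self i s)) (hB i (mem_insert_self i s)))
        · exact (totalDegree_finset_prod _ _).trans
            (Finset.sum_le_sum fun j hj => (hA j (mem_insert_of_mem hj)).trans (le_max_left _ _))
      · rw [Function.update_of_ne (ne_of_mem_of_not_mem hi' ha), Finset.sum_insert ha, mul_assoc]
        refine (totalDegree_mul _ _).trans
          (add_le_add ((hB a (mem_insert_self a s)).trans (le_max_right _ _)) (hcd i hi'))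

noncomputable def clamp (m : Fin n →₀ ℕ) : Fin n →₀ ℕ :=
  Finsupp.mapRange (fun e => min e 1) (by decide) m

lemma sum_univ_eq (m : Fin n →₀ ℕ) : m.sum (fun _ e => e) = ∑ j, m j :=
  Finsupp.sum_fintype _ _ (fun _ => rfl)

lemma monomial_eq_prod (m : Fin n →₀ ℕ) : (monomial m (1:ℂ) : R') = ∏ i, X i ^ m i := by
  rw [← prod_X_pow_eq_monomial]
  exact Finset.prod_subset (Finset.subset_univ _) (fun i _ hi => by
    simp [Finsupp.notMem_support_iff.mp hi])

lemma clamp_apply (m : Fin n →₀ ℕ) (i : Fin n) : clamp m i = min (m i) 1 := rfl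

lemma monomial_clamp (m : Fin n →₀ ℕ) :
    ∃ c : Fin n → R',
      (monomial m (1:ℂ) : R') - monomial (clamp m) (1:ℂ) = ∑ i, c i * (X i ^ 2 - X i) ∧
      ∀ i, (c i * (X i ^ 2 - X i)).totalDegree ≤ ∑ j, m j := by
  obtain ⟨c, hc, hcd⟩ := telescope Finset.univ (fun i => X i ^ m i)
    (fun i => X i ^ min (m i) 1) (fun i => X i ^ 2 - X i) (fun i => m i) (fun i => min (m i) 1)
    (fun i _ => by simp [totalDegree_X_pow]) (fun i _ => by simp [totalDegree_X_pow])
    (fun i _ => pow_red i (m i))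
  have hmax : ∀ j : Fin n, max (m j) (min (m j) 1) = m j :=
    fun j => max_eq_left (min_le_left _ _)
  refine ⟨c, ?_, fun i => (hcd i (Finset.mem_univ i)).trans ?_⟩
  · have h2 : (monomial (clamp m) (1:ℂ) : R') = ∏ i, X i ^ min (m i) 1 := by
      rw [monomial_eq_prod]
      exact Finset.prod_congr rfl (fun i _ => by rw [clamp_apply])
    rw [monomial_eq_prod, h2]
    exact hc
  · exact le_of_eq (Finset.sum_congr rfl fun j _ => hmax j)

lemma monomial_point (w : Fin n → ℂ) (m : Fin n →₀ ℕ) :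
    ∃ c : Fin n → R',
      (monomial m (1:ℂ) : R') - C (∏ i, w i ^ m i) = ∑ i, c i * (X i - C (w i)) ∧
      ∀ i, (c i * (X i - C (w i))).totalDegree ≤ ∑ j, m j := by
  obtain ⟨c, hc, hcd⟩ := telescope Finset.univ (fun i => X i ^ m i)
    (fun i => C (w i ^ m i)) (fun i => X i - C (w i)) (fun i => m i) (fun _ => 0)
    (fun i _ => by simp [totalDegree_X_pow]) (fun i _ => le_of_eq (totalDegree_C _))
    (fun i _ => by
      obtain ⟨q, hq⟩ := sub_dvd_pow_sub_pow (X i : R') (C (w i)) (m i)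
      refine ⟨q, ?_⟩
      show (X i : R') ^ m i - C (w i ^ m i) = q * (X i - C (w i))
      rw [map_pow]; linear_combination hq)
  refine ⟨c, ?_, fun i => (hcd i (Finset.mem_univ i)).trans (le_of_eq ?_)⟩
  · have h2 : (C (∏ i, w i ^ m i) : R') = ∏ i, (C (w i ^ m i) : R') := map_prod _ _ _
    rw [monomial_eq_prod, h2]
    exact hc
  · exact Finset.sum_congr rfl fun j _ => max_eq_left (Nat.zero_le _)

noncomputable def chi (v : Fin n → Bool) : R' := ∏ i, (if v i then X i else 1 - X i)

def wpt (v : Fin n → Bool) : Fin n → ℂ := fun i => if v i then 1 else 0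

lemma sum_chi : ∑ v : Fin n → Bool, chi v = (1 : R') := by
  classical
  have h := Finset.prod_univ_sum (fun _ : Fin n => (Finset.univ : Finset Bool))
    (fun i b => if b then (X i : R') else 1 - X i)
  rw [Fintype.piFinset_univ] at h
  have h1 : ∀ i : Fin n, (∑ b : Bool, if b then (X i : R') else 1 - X i) = 1 := by
    intro i
    rw [Fintype.sum_bool]
    norm_num
  calc ∑ v : Fin n → Bool, chi v
      = ∏ i : Fin n, ∑ b : Bool, (if b then (X i : R') else 1 - X i) := by rw [h]; rfl
    _ = ∏ _i : Fin n, (1 : R') := Finset.prod_congr rfl fun i _ => h1 i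
    _ = 1 := Finset.prod_const_one

lemma deg_chi (v : Fin n → Bool) : (chi v).totalDegree ≤ n := by
  refine (totalDegree_finset_prod _ _).trans ?_
  have h1 : ∀ i : Fin n, ((if v i then (X i : R') else 1 - X i)).totalDegree ≤ 1 := by
    intro i
    by_cases h : v i <;> simp only [h, if_true, if_false]
    · exact le_of_eq (totalDegree_X i)
    · exact (totalDegree_sub _ _).trans (by simp [totalDegree_X])
  calc ∑ i, ((if v i then (X i : R') else 1 - X i)).totalDegree ≤ ∑ _i : Fin n, 1 :=
        Finset.sum_le_sum fun i _ => h1 i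
    _ = n := by simp

lemma X_sub_mul_chi (v : Fin n → Bool) (i : Fin n) :
    ∃ P : R', (X i - C (wpt v i)) * chi v = P * (X i ^ 2 - X i) := by
  classical
  have h := Finset.mul_prod_erase Finset.univ (fun j => if v j then (X j : R') else 1 - X j)
    (Finset.mem_univ i)
  set Q : R' := ∏ j ∈ Finset.univ.erase i, (if v j then (X j : R') else 1 - X j) with hQ
  have hchi : chi v = (if v i then (X i : R') else 1 - X i) * Q := h.symm
  by_cases hv : v i
  · refine ⟨Q, ?_⟩
    rw [hchi]
    simp only [hv, if_true, wpt]
    push_cast [map_one]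
    ring
  · refine ⟨-Q, ?_⟩
    rw [hchi]
    simp only [hv, if_false, wpt]
    push_cast [map_zero]
    ring

/-- `f` is a combination of the field equations with summand degrees `≤ D`. -/
def FRep (D : ℕ) (f : R') : Prop :=
  ∃ b : Fin n → R', f = ∑ i, b i * (X i ^ 2 - X i) ∧
    ∀ i, (b i * (X i ^ 2 - X i)).totalDegree ≤ D

lemma FRep.mono {D D' : ℕ} (h : D ≤ D') {f : R'} : FRep D f → FRep D' f :=
  fun ⟨b, hb, hd⟩ => ⟨b, hb, fun i => (hd i).trans h⟩

lemma FRep.zero {D : ℕ} : FRep D (0 : R') := ⟨0, by simp, by simp⟩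

lemma FRep.add {D : ℕ} {f g : R'} (hf : FRep D f) (hg : FRep D g) : FRep D (f + g) := by
  obtain ⟨b, hb, hbd⟩ := hf; obtain ⟨c, hc, hcd⟩ := hg
  refine ⟨b + c, ?_, fun i => ?_⟩
  · rw [hb, hc, ← Finset.sum_add_distrib]
    exact Finset.sum_congr rfl fun i _ => by simp [add_mul]
  · have h2 : (b + c) i * (X i ^ 2 - X i) = b i * (X i ^ 2 - X i) + c i * (X i ^ 2 - X i) := by
      simp [add_mul]
    rw [h2]
    exact (totalDegree_add _ _).trans (max_le (hbd i) (hcd i))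

lemma FRep.mul_left {D : ℕ} {f : R'} (c : R') (hf : FRep D f) :
    FRep (c.totalDegree + D) (c * f) := by
  obtain ⟨b, hb, hbd⟩ := hf
  refine ⟨fun i => c * b i, ?_, fun i => ?_⟩
  · rw [hb, Finset.mul_sum]
    exact Finset.sum_congr rfl fun i _ => by ring
  · rw [mul_assoc]
    exact (totalDegree_mul _ _).trans (add_le_add le_rfl (hbd i))

lemma FRep.sum {D : ℕ} {ι : Type*} (s : Finset ι) (f : ι → R')
    (h : ∀ i ∈ s, FRep D (f i)) : FRep D (∑ i ∈ s, f i) := by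
  classical
  induction s using Finset.induction_on with
  | empty => simpa using FRep.zero
  | @insert a s ha ih =>
    rw [Finset.sum_insert ha]
    exact (h a (mem_insert_self a s)).add (ih fun i hi => h i (mem_insert_of_mem hi))

lemma sq_eq (f : R') : squarefreePart f = ∑ m ∈ f.support, monomial (clamp m) (f.coeff m) :=
  rfl

lemma sf_deg (f : R') : (squarefreePart f).totalDegree ≤ n := by
  rw [sq_eq]
  refine (totalDegree_finset_sum _ _).trans (Finset.sup_le fun m _ => ?_)
  refine (totalDegree_monomial_le _ _).trans ?_
  have h1 : ((clamp m).sum fun _ => id) = ∑ j, min (m j) 1 := by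
    rw [show ((clamp m).sum fun _ => id) = (clamp m).sum fun _ e => e from rfl, sum_univ_eq]
    exact Finset.sum_congr rfl fun j _ => clamp_apply m j
  rw [h1]
  calc ∑ j, min (m j) 1 ≤ ∑ _j : Fin n, 1 := Finset.sum_le_sum fun j _ => min_le_right _ _
    _ = n := by simp

lemma FRep_sub_squarefree (f : R') : FRep f.totalDegree (f - squarefreePart f) := by
  have h0 : f - squarefreePart f
      = ∑ m ∈ f.support,
          (C (f.coeff m) * ((monomial m (1:ℂ) : R') - monomial (clamp m) 1)) := by
    rw [sq_eq]
    nth_rewrite 1 [f.as_sum]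
    rw [← Finset.sum_sub_distrib]
    refine Finset.sum_congr rfl fun m _ => ?_
    rw [mul_sub, C_mul_monomial, C_mul_monomial, mul_one]
  rw [h0]
  refine FRep.sum _ _ fun m hm => ?_
  obtain ⟨c, hc, hcd⟩ := monomial_clamp m
  have h1 : FRep (∑ j, m j) ((monomial m (1:ℂ) : R') - monomial (clamp m) 1) := ⟨c, hc, hcd⟩
  refine FRep.mono ?_ (h1.mul_left (C (f.coeff m)))
  rw [totalDegree_C, zero_add, ← sum_univ_eq]
  exact le_totalDegree hm

lemma fprod_univ (w : Fin n → ℂ) (m : Fin n →₀ ℕ) :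
    (m.prod fun i e => w i ^ e) = ∏ i, w i ^ m i :=
  Finsupp.prod_fintype _ _ (fun i => pow_zero _)

lemma FRep_monomial_chi (v : Fin n → Bool) (m : Fin n →₀ ℕ) :
    FRep ((∑ j, m j) + n)
      ((monomial m (1:ℂ) : R') * chi v - C (∏ i, wpt v i ^ m i) * chi v) := by
  classical
  obtain ⟨c, hc, hcd⟩ := monomial_point (wpt v) m
  have h1 : (monomial m (1:ℂ) : R') * chi v - C (∏ i, wpt v i ^ m i) * chi v
      = ∑ i, (c i * (X i - C (wpt v i))) * chi v := by
    rw [← Finset.sum_mul, ← hc]; ring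
  choose P hP using X_sub_mul_chi v
  refine ⟨fun i => c i * P i, ?_, fun i => ?_⟩
  · rw [h1]
    refine Finset.sum_congr rfl fun i _ => ?_
    show c i * (X i - C (wpt v i)) * chi v = c i * P i * (X i ^ 2 - X i)
    rw [mul_assoc, hP i, ← mul_assoc]
  · have h3 : (c i * P i) * (X i ^ 2 - X i) = (c i * (X i - C (wpt v i))) * chi v := by
      rw [mul_assoc, ← hP i]; ring
    show ((c i * P i) * (X i ^ 2 - X i)).totalDegree ≤ (∑ j, m j) + n
    rw [h3]
    exact (totalDegree_mul _ _).trans (add_le_add (hcd i) (deg_chi v))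

lemma FRep_mul_chi (v : Fin n → Bool) (f : R') :
    FRep (f.totalDegree + n) (f * chi v - C (eval (wpt v) f) * chi v) := by
  classical
  have he : eval (wpt v) f = ∑ m ∈ f.support, f.coeff m * ∏ i, (wpt v i) ^ m i := by
    conv_lhs => rw [f.as_sum]
    rw [map_sum]
    exact Finset.sum_congr rfl fun m _ => by rw [eval_monomial, fprod_univ]
  have h0 : f * chi v - C (eval (wpt v) f) * chi v
      = ∑ m ∈ f.support, (C (f.coeff m) *
          ((monomial m (1:ℂ) : R') * chi v - C (∏ i, (wpt v i) ^ m i) * chi v)) := by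
    rw [he]
    nth_rewrite 1 [f.as_sum]
    rw [map_sum, Finset.sum_mul, Finset.sum_mul, ← Finset.sum_sub_distrib]
    refine Finset.sum_congr rfl fun m _ => ?_
    rw [mul_sub, ← mul_assoc, ← mul_assoc, C_mul_monomial, mul_one, ← C_mul]
  rw [h0]
  refine FRep.sum _ _ fun m hm => ?_
  refine FRep.mono ?_ ((FRep_monomial_chi v m).mul_left (C (f.coeff m)))
  rw [totalDegree_C, zero_add]
  exact add_le_add_left (by rw [← sum_univ_eq]; exact le_totalDegree hm) n

def SS (F : Finset R') : Set R' :=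
  (↑(F.image squarefreePart) : Set R') ∪ {p : R' | ∃ i : Fin n, p = X i ^ 2 - X i}

lemma exists_p (F : Finset R') {r : R'} (hr : r ∈ Ideal.span (SS F)) (v : Fin n → Bool)
    (h0 : eval (wpt v) r ≠ 0) : ∃ p ∈ F.image squarefreePart, eval (wpt v) p ≠ 0 := by
  by_contra hcon
  push_neg at hcon
  have hsub : SS F ⊆ (RingHom.ker (eval (wpt v)) : Ideal R') := by
    rintro p (hp | ⟨i, rfl⟩)
    · exact RingHom.mem_ker.mpr (hcon p (Finset.mem_coe.mp hp))
    · refine RingHom.mem_ker.mpr ?_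
      rw [map_sub, map_pow, eval_X]
      cases h : v i <;> simp [wpt, h]
  exact h0 (RingHom.mem_ker.mp (Ideal.span_le.mpr hsub hr))

def Rep (F : Finset R') (D : ℕ) (f : R') : Prop :=
  ∃ (a : F.image squarefreePart → R') (b : Fin n → R'),
    f = (∑ p : F.image squarefreePart, a p * (p : R')) + ∑ i, b i * (X i ^ 2 - X i) ∧
    (∀ p : F.image squarefreePart, (a p * (p : R')).totalDegree ≤ D) ∧
    (∀ i, (b i * (X i ^ 2 - X i)).totalDegree ≤ D)

lemma Rep.mono {F : Finset R'} {D D' : ℕ} (h : D ≤ D') {f : R'} : Rep F D f → Rep F D' f :=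
  fun ⟨a, b, he, ha, hb⟩ => ⟨a, b, he, fun p => (ha p).trans h, fun i => (hb i).trans h⟩

lemma Rep.zero {F : Finset R'} {D : ℕ} : Rep F D (0 : R') := ⟨0, 0, by simp, by simp, by simp⟩

lemma Rep.ofFRep {F : Finset R'} {D : ℕ} {f : R'} (h : FRep D f) : Rep F D f := by
  obtain ⟨b, hb, hbd⟩ := h
  exact ⟨0, b, by simpa using hb, by simp, hbd⟩

lemma Rep.add {F : Finset R'} {D : ℕ} {f g : R'} (hf : Rep F D f) (hg : Rep F D g) : Rep F D (f + g) := by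
  obtain ⟨a1, b1, he1, ha1, hb1⟩ := hf
  obtain ⟨a2, b2, he2, ha2, hb2⟩ := hg
  refine ⟨a1 + a2, b1 + b2, ?_, fun p => ?_, fun i => ?_⟩
  · rw [he1, he2]
    have h1 : (∑ p : F.image squarefreePart, (a1 + a2) p * (p : R'))
        = (∑ p : F.image squarefreePart, a1 p * (p : R'))
          + ∑ p : F.image squarefreePart, a2 p * (p : R') := by
      rw [← Finset.sum_add_distrib]
      exact Finset.sum_congr rfl fun p _ => by simp [add_mul]
    have h2 : (∑ i, (b1 + b2) i * (X i ^ 2 - X i))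
        = (∑ i, b1 i * (X i ^ 2 - X i)) + ∑ i, b2 i * (X i ^ 2 - X i) := by
      rw [← Finset.sum_add_distrib]
      exact Finset.sum_congr rfl fun i _ => by simp [add_mul]
    rw [h1, h2]
    ring
  · have h2 : (a1 + a2) p * (p : R') = a1 p * (p : R') + a2 p * (p : R') := by simp [add_mul]
    rw [h2]
    exact (totalDegree_add _ _).trans (max_le (ha1 p) (ha2 p))
  · have h2 : (b1 + b2) i * (X i ^ 2 - X i)
        = b1 i * (X i ^ 2 - X i) + b2 i * (X i ^ 2 - X i) := by simp [add_mul]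
    rw [h2]
    exact (totalDegree_add _ _).trans (max_le (hb1 i) (hb2 i))

lemma Rep.smul {F : Finset R'} {D : ℕ} (k : ℂ) {f : R'} (hf : Rep F D f) : Rep F D (C k * f) := by
  obtain ⟨a, b, he, ha, hb⟩ := hf
  refine ⟨fun p => C k * a p, fun i => C k * b i, ?_, fun p => ?_, fun i => ?_⟩
  · rw [he, mul_add, Finset.mul_sum, Finset.mul_sum]
    congr 1
    · exact Finset.sum_congr rfl fun p _ => by ring
    · exact Finset.sum_congr rfl fun i _ => by ring
  · rw [mul_assoc]
    exact (totalDegree_mul _ _).trans (by simpa [totalDegree_C] using ha p)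
  · rw [mul_assoc]
    exact (totalDegree_mul _ _).trans (by simpa [totalDegree_C] using hb i)

lemma Rep.sub {F : Finset R'} {D : ℕ} {f g : R'} (hf : Rep F D f) (hg : Rep F D g) : Rep F D (f - g) := by
  have hneg : Rep F D (-g) := by
    have := Rep.smul (-1 : ℂ) hg
    simpa using this
  simpa [sub_eq_add_neg] using Rep.add hf hneg

lemma Rep.sum {F : Finset R'} {D : ℕ} {ι : Type*} (s : Finset ι) (f : ι → R')
    (h : ∀ i ∈ s, Rep F D (f i)) : Rep F D (∑ i ∈ s, f i) :=
  Finset.sum_induction f (Rep F D) (fun _ _ => Rep.add) Rep.zero h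

lemma Rep.chip {F : Finset R'} (v : Fin n → Bool) (p : R') (hp : p ∈ F.image squarefreePart) :
    Rep F (n + n) (chi v * p) := by
  classical
  have hpd : p.totalDegree ≤ n := by
    obtain ⟨f₀, _, rfl⟩ := Finset.mem_image.mp hp
    exact sf_deg f₀
  refine ⟨fun q => if q = ⟨p, hp⟩ then chi v else 0, 0, ?_, fun q => ?_, fun i => ?_⟩
  · have hz : (∑ i, (0 : Fin n → R') i * (X i ^ 2 - X i)) = 0 := by simp
    rw [hz, add_zero]
    rw [Finset.sum_congr rfl (fun (q : F.image squarefreePart) _ =>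
      show (if q = (⟨p, hp⟩ : F.image squarefreePart) then chi v else 0) * (q : R')
      = if q = (⟨p, hp⟩ : F.image squarefreePart) then chi v * p else 0 by
        split <;> rename_i hq
        · subst hq; rfl
        · rw [zero_mul])]
    rw [Finset.sum_ite_eq' Finset.univ (⟨p, hp⟩ : F.image squarefreePart)
      (fun _ => chi v * p)]
    simp
  · show ((if q = (⟨p, hp⟩ : F.image squarefreePart) then chi v else 0) * (q : R')).totalDegree ≤ n + n
    split
    · rename_i hq
      subst hq
      exact (totalDegree_mul _ _).trans (add_le_add (deg_chi v) hpd)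
    · simp
  · simp

lemma main (F : Finset R') {f : R'} (hf : f ∈ Ideal.span (SS F))
    (hdeg : f.totalDegree ≤ 3 * n) : Rep F (3 * n) f := by
  classical
  obtain ⟨b0, hb0, hb0d⟩ := FRep_sub_squarefree f
  set r := squarefreePart f with hrdef
  have hFR : FRep (3 * n) (f - r) := FRep.mono hdeg ⟨b0, hb0, hb0d⟩
  have hrI : r ∈ Ideal.span (SS F) := by
    have hsubI : f - r ∈ Ideal.span (SS F) := by
      rw [hb0]
      exact Ideal.sum_mem _ fun i _ =>
        Ideal.mul_mem_left _ _ (Ideal.subset_span (Or.inr ⟨i, rfl⟩))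
    have h2 := Ideal.sub_mem _ hf hsubI
    simpa using h2
  have hrd : r.totalDegree ≤ n := sf_deg f
  rw [show f = (f - r) + r by ring]
  refine Rep.add (Rep.ofFRep hFR) ?_
  rw [show r = ∑ v : Fin n → Bool, r * chi v by rw [← Finset.mul_sum, sum_chi, mul_one]]
  refine Rep.sum _ _ fun v _ => ?_
  rw [show r * chi v
    = (r * chi v - C (eval (wpt v) r) * chi v) + C (eval (wpt v) r) * chi v by ring]
  refine Rep.add (Rep.ofFRep (FRep.mono ?_ (FRep_mul_chi v r))) ?_
  · calc r.totalDegree + n ≤ n + n := add_le_add_left hrd n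
      _ ≤ 3 * n := by omega
  · by_cases h0 : eval (wpt v) r = 0
    · rw [h0, map_zero, zero_mul]
      exact Rep.zero
    · obtain ⟨p, hp, hpne⟩ := exists_p F hrI v h0
      have hpd : p.totalDegree ≤ n := by
        obtain ⟨f₀, _, rfl⟩ := Finset.mem_image.mp hp
        exact sf_deg f₀
      have hkey : C (eval (wpt v) r) * chi v
          = C (eval (wpt v) r / eval (wpt v) p) *
              ((chi v * p) - (p * chi v - C (eval (wpt v) p) * chi v)) := by
        rw [show (chi v * p) - (p * chi v - C (eval (wpt v) p) * chi v)
          = C (eval (wpt v) p) * chi v by ring]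
        rw [← mul_assoc, ← C_mul, div_mul_cancel₀ _ hpne]
      rw [hkey]
      refine Rep.smul _ (Rep.sub ?_ ?_)
      · exact Rep.mono (by omega) (Rep.chip v p hp)
      · refine Rep.ofFRep (FRep.mono ?_ (FRep_mul_chi v p))
        calc p.totalDegree + n ≤ n + n := add_le_add_left hpd n
          _ ≤ 3 * n := by omega

end CSDaux


/-- The complete solving degree of `F_B ∪ H_X` is at most `3n`: for every element `h` of
the reduced DRL Gröbner basis of the ideal generated by `S = F_B ∪ {x_i² - x_i}` and every
monomial `m` with `deg(m·h) ≤ 3n`, `m·h` has a representation over `S` with all summands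
of degree at most `3n`. -/
theorem complete_solving_degree_boolean_bound
    (n : ℕ) (F : Finset (MvPolynomial (Fin n) ℂ)) :
    ∀ G : Finset (MvPolynomial (Fin n) ℂ),
      IsReducedGB (Ideal.span
          ((↑(F.image squarefreePart) : Set (MvPolynomial (Fin n) ℂ)) ∪
            {p : MvPolynomial (Fin n) ℂ | ∃ i : Fin n, p = X i ^ 2 - X i})) G →
      ∀ h ∈ G, ∀ m : Fin n →₀ ℕ,
        (monomial m (1:ℂ) * h).totalDegree ≤ 3 * n →
        ∃ (a : F.image squarefreePart → MvPolynomial (Fin n) ℂ)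
          (b : Fin n → MvPolynomial (Fin n) ℂ),
          monomial m (1:ℂ) * h =
              (∑ p : F.image squarefreePart, a p * (p : MvPolynomial (Fin n) ℂ)) +
                ∑ i, b i * (X i ^ 2 - X i) ∧
          (∀ p : F.image squarefreePart,
            (a p * (p : MvPolynomial (Fin n) ℂ)).totalDegree ≤ 3 * n) ∧
          (∀ i, (b i * (X i ^ 2 - X i)).totalDegree ≤ 3 * n) := by
  intro G hG h hh m hdeg
  have hhI : h ∈ Ideal.span (CSDaux.SS F) := hG.1.1 hh
  have hfI : monomial m (1:ℂ) * h ∈ Ideal.span (CSDaux.SS F) :=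
    Ideal.mul_mem_left _ _ hhI
  obtain ⟨a, b, he, ha, hb⟩ := CSDaux.main F hfI hdeg
  exact ⟨a, b, he, ha, hb⟩
end

section
/- Let f = Σ_{k=1}^t m_k be a Boolean polynomial with t > s monomials, where s ≥ 3. Set S_t = ⌈(t-s)/(s-2)⌉ and introduce new Boolean variables u_1,...,u_{S_t}. Define the splitting set S(f,s) = {f̌_1,...,f̌_{S_t+1}} where f̌_1 = Σ_{k=1}^{s-1} m_k + u_1, f̌_j = Σ_{k=(j-1)(s-2)+2}^{j(s-2)+1} m_k + u_{j-1} + u_j for 2 ≤ j ≤ S_t, and f̌_{S_t+1} = Σ_{k=S_t(s-2)+2}^{t} m_k + u_{S_t}. Then each polynomial of S(f,s) has at most s monomials, and the ideal generated by S(f,s) in the Boolean ring F_2[X, U]/(field equations) intersected with the Boolean ring in X equals the ideal generated by f; moreover, the projection to the X-coordinates of the Boolean solution set of S(f,s) equals the Boolean solution set of f. -/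
open MvPolynomial

/-- The `k`-th monomial of `f`, as a polynomial in the extended variables. -/
noncomputable def MXmono (n St : ℕ) (m : ℕ → (Fin n →₀ ℕ)) (k : ℕ) :
    MvPolynomial (Fin n ⊕ Fin St) (ZMod 2) :=
  rename Sum.inl (monomial (m k) 1)

/-- The auxiliary variable `u_j` (1-based index `j ∈ {1,…,St}`). -/
noncomputable def uVar (n St : ℕ) (j : ℕ) : MvPolynomial (Fin n ⊕ Fin St) (ZMod 2) :=
  if h : j - 1 < St then X (Sum.inr (⟨j - 1, h⟩ : Fin St)) else 0

/-- The `j`-th polynomial `f̌_j` of the splitting set `S(f,s)` (1-based `j ∈ {1,…,St+1}`). -/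
noncomputable def splitPoly (n s t St : ℕ) (m : ℕ → (Fin n →₀ ℕ)) (j : ℕ) :
    MvPolynomial (Fin n ⊕ Fin St) (ZMod 2) :=
  if j = 1 then (∑ k ∈ Finset.Icc 1 (s - 1), MXmono n St m k) + uVar n St 1
  else if j = St + 1 then
    (∑ k ∈ Finset.Icc (St * (s - 2) + 2) t, MXmono n St m k) + uVar n St St
  else
    (∑ k ∈ Finset.Icc ((j - 1) * (s - 2) + 2) (j * (s - 2) + 1), MXmono n St m k)
      + uVar n St (j - 1) + uVar n St j


open Finset in
lemma card_support_sum_le {σ : Type*} (S : Finset ℕ)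
    (g : ℕ → MvPolynomial σ (ZMod 2)) (h : ∀ i, (g i).support.card ≤ 1) :
    (∑ i ∈ S, g i).support.card ≤ S.card := by
  classical
  induction S using Finset.induction_on with
  | empty => simp
  | @insert a S hnot ih =>
    rw [Finset.sum_insert hnot, Finset.card_insert_of_notMem hnot]
    refine le_trans (Finset.card_le_card support_add) ?_
    refine le_trans (Finset.card_union_le _ _) ?_
    have := h a
    omega

lemma bool_sq_mem {σ : Type*} (p : MvPolynomial σ (ZMod 2)) :
    p ^ 2 - p ∈ Ideal.span {q : MvPolynomial σ (ZMod 2) | ∃ i, q = X i ^ 2 - X i} := by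
  induction p using MvPolynomial.induction_on with
  | C c =>
    have : (c : ZMod 2) ^ 2 = c := by revert c; decide
    rw [← map_pow, this, sub_self]; exact Ideal.zero_mem _
  | add p q hp hq =>
    have h2 : (2 : MvPolynomial σ (ZMod 2)) = 0 := by
      have := CharTwo.add_self_eq_zero (1 : MvPolynomial σ (ZMod 2)); linear_combination this
    have : (p + q) ^ 2 - (p + q) = (p ^ 2 - p) + (q ^ 2 - q) + 2 * (p * q) := by ring
    rw [this, h2, zero_mul, add_zero]
    exact Ideal.add_mem _ hp hq
  | mul_X p i hp =>
    have : (p * X i) ^ 2 - p * X i = p ^ 2 * (X i ^ 2 - X i) + (p ^ 2 - p) * X i := by ring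
    rw [this]
    exact Ideal.add_mem _
      (Ideal.mul_mem_left _ _ (Ideal.subset_span ⟨i, rfl⟩))
      (Ideal.mul_mem_right _ _ hp)

lemma tele_sum {M : Type*} [AddCommMonoid M] (c : ℕ → M) (e : ℕ) :
    ∀ N, 1 ≤ N →
      ((∑ k ∈ Finset.Ioc 0 (e + 1), c k) +
        ∑ j ∈ Finset.Icc 2 N, ∑ k ∈ Finset.Ioc ((j - 1) * e + 1) (j * e + 1), c k)
      = ∑ k ∈ Finset.Ioc 0 (N * e + 1), c k := by
  intro N
  induction N with
  | zero => omega
  | succ N ih =>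
    intro _
    rcases Nat.eq_or_lt_of_le (show 1 ≤ N + 1 by omega) with h | h
    · simp [← h]
    · have hN : 1 ≤ N := by omega
      have hins : Finset.Icc 2 (N + 1) = insert (N + 1) (Finset.Icc 2 N) := by
        ext x; simp [Finset.mem_Icc, Finset.mem_insert]; omega
      rw [hins, Finset.sum_insert (by simp), ← add_assoc,
        add_comm _ (∑ k ∈ Finset.Ioc ((N + 1 - 1) * e + 1) ((N + 1) * e + 1), c k),
        add_assoc, ih hN]
      rw [add_comm]
      have : (N + 1 - 1) * e + 1 = N * e + 1 := by simp
      rw [this]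
      exact Finset.sum_Ioc_consecutive c (by omega) (by nlinarith)

lemma icc_concat {M : Type*} [AddCommMonoid M] (c : ℕ → M) (a b : ℕ) (h : a ≤ b) :
    (∑ k ∈ Finset.Icc 1 a, c k) + ∑ k ∈ Finset.Icc (a + 1) b, c k
      = ∑ k ∈ Finset.Icc 1 b, c k := by
  have h1 : Finset.Icc 1 a = Finset.Ioc 0 a := by
    ext x; simp [Finset.mem_Icc, Finset.mem_Ioc]; omega
  have h2 : Finset.Icc (a + 1) b = Finset.Ioc a b := by
    ext x; simp [Finset.mem_Icc, Finset.mem_Ioc]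
  have h3 : Finset.Icc 1 b = Finset.Ioc 0 b := by
    ext x; simp [Finset.mem_Icc, Finset.mem_Ioc]; omega
  rw [h1, h2, h3]
  exact Finset.sum_Ioc_consecutive c (by omega) h

lemma sum_splitPoly (n s t St : ℕ) (m : ℕ → Fin n →₀ ℕ) (hs : 3 ≤ s)
    (hSt1 : 1 ≤ St) (hA : St * (s - 2) + 1 ≤ t) :
    ∑ j ∈ Finset.Icc 1 (St + 1), splitPoly n s t St m j
      = ∑ k ∈ Finset.Icc 1 t, MXmono n St m k := by
  classical
  have hsplit : Finset.Icc 1 (St + 1) = insert 1 (insert (St + 1) (Finset.Icc 2 St)) := by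
    ext x; simp [Finset.mem_Icc, Finset.mem_insert]; omega
  rw [hsplit, Finset.sum_insert (by simp [Finset.mem_Icc]; omega),
    Finset.sum_insert (by simp [Finset.mem_Icc])]
  have h1 : splitPoly n s t St m 1
      = (∑ k ∈ Finset.Icc 1 (s - 1), MXmono n St m k) + uVar n St 1 := by
    rw [splitPoly, if_pos rfl]
  have h2 : splitPoly n s t St m (St + 1)
      = (∑ k ∈ Finset.Icc (St * (s - 2) + 2) t, MXmono n St m k) + uVar n St St := by
    rw [splitPoly, if_neg (by omega), if_pos rfl]
  have h3 : ∑ j ∈ Finset.Icc 2 St, splitPoly n s t St m j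
      = ∑ j ∈ Finset.Icc 2 St,
          ((∑ k ∈ Finset.Ioc ((j - 1) * (s - 2) + 1) (j * (s - 2) + 1), MXmono n St m k)
            + uVar n St (j - 1) + uVar n St j) := by
    refine Finset.sum_congr rfl fun j hj => ?_
    simp only [Finset.mem_Icc] at hj
    rw [splitPoly, if_neg (by omega), if_neg (by omega)]
    have hI : Finset.Icc ((j - 1) * (s - 2) + 2) (j * (s - 2) + 1)
        = Finset.Ioc ((j - 1) * (s - 2) + 1) (j * (s - 2) + 1) := by
      ext x; simp [Finset.mem_Icc, Finset.mem_Ioc]; omega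
    rw [hI]
  rw [h1, h2, h3, Finset.sum_add_distrib, Finset.sum_add_distrib]
  have hm1 : (∑ k ∈ Finset.Icc 1 (s - 1), MXmono n St m k)
      + ∑ j ∈ Finset.Icc 2 St,
          ∑ k ∈ Finset.Ioc ((j - 1) * (s - 2) + 1) (j * (s - 2) + 1), MXmono n St m k
      = ∑ k ∈ Finset.Ioc 0 (St * (s - 2) + 1), MXmono n St m k := by
    have := tele_sum (MXmono n St m) (s - 2) St hSt1
    have hIcc : Finset.Icc 1 (s - 1) = Finset.Ioc 0 ((s - 2) + 1) := by
      ext x; simp [Finset.mem_Icc, Finset.mem_Ioc]; omega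
    rw [hIcc]; exact this
  have hm2 : (∑ k ∈ Finset.Ioc 0 (St * (s - 2) + 1), MXmono n St m k)
      + ∑ k ∈ Finset.Icc (St * (s - 2) + 2) t, MXmono n St m k
      = ∑ k ∈ Finset.Ioc 0 t, MXmono n St m k := by
    have hIcc : Finset.Icc (St * (s - 2) + 2) t = Finset.Ioc (St * (s - 2) + 1) t := by
      ext x; simp [Finset.mem_Icc, Finset.mem_Ioc]; omega
    rw [hIcc]
    exact Finset.sum_Ioc_consecutive _ (by omega) hA
  have hIoc : (∑ k ∈ Finset.Ioc 0 t, MXmono n St m k)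
      = ∑ k ∈ Finset.Icc 1 t, MXmono n St m k := by
    apply Finset.sum_congr _ fun _ _ => rfl
    ext x; simp [Finset.mem_Icc, Finset.mem_Ioc]; omega
  have hu1 : ∑ j ∈ Finset.Icc 2 St, uVar n St (j - 1)
      = ∑ j ∈ Finset.Icc 1 (St - 1), uVar n St j := by
    rw [show Finset.Icc 2 St = Finset.Icc (1 + 1) ((St - 1) + 1) by congr 1; omega]
    rw [← Finset.map_add_right_Icc, Finset.sum_map]
    simp [addRightEmbedding]
  have hu : uVar n St 1 + uVar n St St
      + (∑ j ∈ Finset.Icc 2 St, uVar n St (j - 1))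
      + ∑ j ∈ Finset.Icc 2 St, uVar n St j = 0 := by
    rw [hu1]
    have e1 : uVar n St 1 + ∑ j ∈ Finset.Icc 2 St, uVar n St j
        = ∑ j ∈ Finset.Icc 1 St, uVar n St j := by
      rw [show Finset.Icc 1 St = insert 1 (Finset.Icc 2 St) by
        ext x; simp [Finset.mem_Icc]; omega, Finset.sum_insert (by simp [Finset.mem_Icc])]
    have e2 : uVar n St St + ∑ j ∈ Finset.Icc 1 (St - 1), uVar n St j
        = ∑ j ∈ Finset.Icc 1 St, uVar n St j := by
      rw [show Finset.Icc 1 St = insert St (Finset.Icc 1 (St - 1)) by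
        ext x; simp [Finset.mem_Icc]; omega,
        Finset.sum_insert (by simp [Finset.mem_Icc]; omega)]
    have := CharTwo.add_self_eq_zero (∑ j ∈ Finset.Icc 1 St, uVar n St j)
    linear_combination e1 + e2 + this
  linear_combination hm1 + hm2 + hIoc + hu

/-- Splitting a Boolean polynomial `f = m_1 + ⋯ + m_t` (`t > s ≥ 3`) into the `s`-sparse
system `S(f,s)` with `St = ⌈(t-s)/(s-2)⌉` new variables: every `f̌_j` has at most `s`
monomials, the ideal generated by `S(f,s)` together with the field equations, intersected
with the Boolean ring in `X`, is the ideal generated by `f` and the `X`-field equations,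
and the projection to the `X`-coordinates of the solution set of `S(f,s)` is the solution
set of `f`. -/
theorem splitting_set_properties
    (n s t : ℕ) (hs : 3 ≤ s) (hts : s < t)
    (m : ℕ → (Fin n →₀ ℕ))
    (hm_inj : ∀ k ∈ Finset.Icc 1 t, ∀ k' ∈ Finset.Icc 1 t, m k = m k' → k = k')
    (hm_sf : ∀ k ∈ Finset.Icc 1 t, ∀ i, m k i ≤ 1)
    (St : ℕ) (hSt : St = ((t - s) + (s - 3)) / (s - 2)) :
    (∀ j ∈ Finset.Icc 1 (St + 1), (splitPoly n s t St m j).support.card ≤ s) ∧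
    (Ideal.comap
        (rename (Sum.inl : Fin n → Fin n ⊕ Fin St) :
          MvPolynomial (Fin n) (ZMod 2) →ₐ[ZMod 2]
            MvPolynomial (Fin n ⊕ Fin St) (ZMod 2)).toRingHom
        (Ideal.span
          ({p | ∃ j ∈ Finset.Icc 1 (St + 1), p = splitPoly n s t St m j} ∪
            {p : MvPolynomial (Fin n ⊕ Fin St) (ZMod 2) |
              ∃ v : Fin n ⊕ Fin St, p = X v ^ 2 - X v}))
      = Ideal.span
          ({∑ k ∈ Finset.Icc 1 t, monomial (m k) (1 : ZMod 2)} ∪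
            {p : MvPolynomial (Fin n) (ZMod 2) | ∃ i : Fin n, p = X i ^ 2 - X i})) ∧
    ({a : Fin n → ZMod 2 | ∃ b : Fin St → ZMod 2,
        ∀ j ∈ Finset.Icc 1 (St + 1), eval (Sum.elim a b) (splitPoly n s t St m j) = 0}
      = {a : Fin n → ZMod 2 |
          eval a (∑ k ∈ Finset.Icc 1 t, monomial (m k) (1 : ZMod 2)) = 0}) := by
  have hs2 : 0 < s - 2 := by omega
  have ht3 : (t - s) + (s - 3) = t - 3 := by omega
  have hdiv1 : St * (s - 2) ≤ t - 3 := by rw [hSt, ht3]; exact Nat.div_mul_le_self _ _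
  have hdiv2 : t - 3 < (St + 1) * (s - 2) := by
    rw [hSt, ht3]; exact (Nat.div_lt_iff_lt_mul hs2).mp (Nat.lt_succ_self _)
  have hA : St * (s - 2) + 1 ≤ t := by omega
  have hB : t ≤ St * (s - 2) + s := by
    have h : (St + 1) * (s - 2) = St * (s - 2) + (s - 2) := by ring
    omega
  have hSt1 : 1 ≤ St := by
    rw [hSt, ht3]; exact (Nat.one_le_div_iff hs2).mpr (by omega)
  have hMX1 : ∀ k, (MXmono n St m k).support.card ≤ 1 := by
    intro k
    rw [MXmono, rename_monomial, support_monomial]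
    split <;> simp
  have huV1 : ∀ j, (uVar n St j).support.card ≤ 1 := by
    intro j
    rw [uVar]
    split
    · simp [support_X]
    · simp
  have hadd : ∀ p q : MvPolynomial (Fin n ⊕ Fin St) (ZMod 2),
      (p + q).support.card ≤ p.support.card + q.support.card := fun p q =>
    le_trans (Finset.card_le_card support_add) (Finset.card_union_le _ _)
  refine ⟨?_, ?_, ?_⟩
  · -- Part 1: sparsity
    intro j hj
    simp only [Finset.mem_Icc] at hj
    rcases eq_or_ne j 1 with rfl | hj1
    · rw [splitPoly, if_pos rfl]
      refine le_trans (hadd _ _) ?_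
      have h1 := card_support_sum_le (Finset.Icc 1 (s - 1)) (MXmono n St m) hMX1
      have h2 := huV1 1
      rw [Nat.card_Icc] at h1
      omega
    rcases eq_or_ne j (St + 1) with rfl | hj2
    · rw [splitPoly, if_neg (by omega), if_pos rfl]
      refine le_trans (hadd _ _) ?_
      have h1 := card_support_sum_le (Finset.Icc (St * (s - 2) + 2) t) (MXmono n St m) hMX1
      have h2 := huV1 St
      rw [Nat.card_Icc] at h1
      omega
    · rw [splitPoly, if_neg hj1, if_neg hj2]
      refine le_trans (hadd _ _) (le_trans (add_le_add (hadd _ _) (huV1 j)) ?_)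
      have h1 := card_support_sum_le
        (Finset.Icc ((j - 1) * (s - 2) + 2) (j * (s - 2) + 1)) (MXmono n St m) hMX1
      have h2 := huV1 (j - 1)
      rw [Nat.card_Icc] at h1
      have hmul : (j - 1) * (s - 2) = j * (s - 2) - (s - 2) := Nat.sub_one_mul j (s - 2)
      have hmul2 : s - 2 ≤ j * (s - 2) := Nat.le_mul_of_pos_left _ (by omega)
      omega
  · -- Part 2: ideals
    set f0 : MvPolynomial (Fin n) (ZMod 2) :=
      ∑ k ∈ Finset.Icc 1 t, monomial (m k) (1 : ZMod 2) with hf0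
    set q : ℕ → MvPolynomial (Fin n) (ZMod 2) :=
      fun jj => ∑ k ∈ Finset.Icc 1 (jj * (s - 2) + 1), monomial (m k) (1 : ZMod 2) with hq
    set ψ : MvPolynomial (Fin n ⊕ Fin St) (ZMod 2) →ₐ[ZMod 2] MvPolynomial (Fin n) (ZMod 2) :=
      aeval (Sum.elim X (fun i : Fin St => q (i.1 + 1))) with hψ
    have hψren : ∀ p : MvPolynomial (Fin n) (ZMod 2), ψ (rename Sum.inl p) = p := by
      intro p
      rw [hψ, aeval_rename, Sum.elim_comp_inl]
      exact DFunLike.congr_fun (aeval_X_left (R := ZMod 2) (σ := Fin n)) p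
    have hψMX : ∀ k, ψ (MXmono n St m k) = monomial (m k) 1 := fun k => hψren _
    have hψu : ∀ jj, 1 ≤ jj → jj ≤ St → ψ (uVar n St jj) = q jj := by
      intro jj h1 h2
      rw [uVar, dif_pos (by omega : jj - 1 < St), hψ, aeval_X, Sum.elim_inr]
      show q (jj - 1 + 1) = q jj
      rw [show jj - 1 + 1 = jj by omega]
    apply le_antisymm
    · intro p hp
      rw [Ideal.mem_comap] at hp
      have h1 := Ideal.mem_map_of_mem ψ.toRingHom hp
      rw [Ideal.map_span] at h1
      have hψp : ψ.toRingHom ((rename (Sum.inl : Fin n → Fin n ⊕ Fin St)).toRingHom p) = p :=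
        hψren p
      rw [hψp] at h1
      refine Ideal.span_le.mpr ?_ h1
      rintro g ⟨g', hg', rfl⟩
      suffices hgoal : ψ g' ∈ Ideal.span
          ({f0} ∪ {p : MvPolynomial (Fin n) (ZMod 2) | ∃ i, p = X i ^ 2 - X i}) by
        exact hgoal
      rcases hg' with ⟨j, hj, rfl⟩ | ⟨v, rfl⟩
      · simp only [Finset.mem_Icc] at hj
        rcases eq_or_ne j 1 with rfl | hj1
        · rw [splitPoly, if_pos rfl, map_add, map_sum]
          simp only [hψMX]
          rw [hψu 1 le_rfl hSt1]
          have hq1 : q 1 = ∑ k ∈ Finset.Icc 1 (s - 1), monomial (m k) (1 : ZMod 2) := by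
            simp only [hq]
            rw [show 1 * (s - 2) + 1 = s - 1 by omega]
          rw [hq1, CharTwo.add_self_eq_zero]
          exact Ideal.zero_mem _
        rcases eq_or_ne j (St + 1) with rfl | hj2
        · rw [splitPoly, if_neg (by omega), if_pos rfl, map_add, map_sum]
          simp only [hψMX]
          rw [hψu St hSt1 le_rfl]
          have hsum := icc_concat (fun k => monomial (m k) (1 : ZMod 2))
            (St * (s - 2) + 1) t hA
          rw [show St * (s - 2) + 1 + 1 = St * (s - 2) + 2 by omega] at hsum
          have heq : (∑ k ∈ Finset.Icc (St * (s - 2) + 2) t, monomial (m k) (1 : ZMod 2))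
              + q St = f0 := by
            simp only [hq, hf0]
            linear_combination hsum
          rw [heq]
          exact Ideal.subset_span (Or.inl rfl)
        · rw [splitPoly, if_neg hj1, if_neg hj2, map_add, map_add, map_sum]
          simp only [hψMX]
          rw [hψu (j - 1) (by omega) (by omega), hψu j (by omega) (by omega)]
          have hle : (j - 1) * (s - 2) + 1 ≤ j * (s - 2) + 1 := by
            have := mul_le_mul_left (show j - 1 ≤ j by omega) (s - 2); omega
          have hsum := icc_concat (fun k => monomial (m k) (1 : ZMod 2))
            ((j - 1) * (s - 2) + 1) (j * (s - 2) + 1) hle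
          rw [show (j - 1) * (s - 2) + 1 + 1 = (j - 1) * (s - 2) + 2 by omega] at hsum
          have hz : (∑ k ∈ Finset.Icc ((j - 1) * (s - 2) + 2) (j * (s - 2) + 1),
                monomial (m k) (1 : ZMod 2)) + q (j - 1) + q j = 0 := by
            simp only [hq]
            have h2 := CharTwo.add_self_eq_zero
              (∑ k ∈ Finset.Icc 1 (j * (s - 2) + 1), monomial (m k) (1 : ZMod 2))
            linear_combination hsum + h2
          rw [hz]
          exact Ideal.zero_mem _
      · rw [map_sub, map_pow]
        cases v with
        | inl i =>
          have : ψ (X (Sum.inl i)) = X i := by rw [hψ, aeval_X, Sum.elim_inl]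
          rw [this]
          exact Ideal.subset_span (Or.inr ⟨i, rfl⟩)
        | inr i =>
          have : ψ (X (Sum.inr i)) = q (i.1 + 1) := by rw [hψ, aeval_X, Sum.elim_inr]
          rw [this]
          exact Ideal.span_mono Set.subset_union_right (bool_sq_mem (q (i.1 + 1)))
    · refine Ideal.span_le.mpr ?_
      rintro g (rfl | ⟨i, rfl⟩)
      · rw [SetLike.mem_coe, Ideal.mem_comap]
        show rename Sum.inl f0 ∈ _
        have hren : rename (Sum.inl : Fin n → Fin n ⊕ Fin St) f0
            = ∑ j ∈ Finset.Icc 1 (St + 1), splitPoly n s t St m j := by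
          rw [sum_splitPoly n s t St m hs hSt1 hA, hf0, map_sum]
          rfl
        rw [hren]
        exact Ideal.sum_mem _ fun j hj => Ideal.subset_span (Or.inl ⟨j, hj, rfl⟩)
      · rw [SetLike.mem_coe, Ideal.mem_comap]
        show rename Sum.inl (X i ^ 2 - X i) ∈ _
        rw [map_sub, map_pow, rename_X]
        exact Ideal.subset_span (Or.inr ⟨Sum.inl i, rfl⟩)
  · -- Part 3: solution sets
    ext a
    simp only [Set.mem_setOf_eq]
    constructor
    · rintro ⟨b, hb⟩
      have h0 : eval (Sum.elim a b)
          (∑ j ∈ Finset.Icc 1 (St + 1), splitPoly n s t St m j) = 0 := by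
        rw [map_sum]
        exact Finset.sum_eq_zero hb
      rw [sum_splitPoly n s t St m hs hSt1 hA, map_sum] at h0
      rw [map_sum, ← h0]
      refine Finset.sum_congr rfl fun k _ => ?_
      rw [MXmono, eval_rename, Sum.elim_comp_inl]
    · intro ha
      set E : ℕ → ZMod 2 := fun k => eval a (monomial (m k) (1 : ZMod 2)) with hE
      have haE : ∑ k ∈ Finset.Icc 1 t, E k = 0 := by
        simp only [hE]; rw [← map_sum]; exact ha
      refine ⟨fun i => ∑ k ∈ Finset.Icc 1 ((i.1 + 1) * (s - 2) + 1), E k, ?_⟩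
      intro j hj
      simp only [Finset.mem_Icc] at hj
      have hMXev : ∀ k, eval (Sum.elim a
          (fun i : Fin St => ∑ k ∈ Finset.Icc 1 ((i.1 + 1) * (s - 2) + 1), E k))
            (MXmono n St m k) = E k := by
        intro k; rw [MXmono, eval_rename, Sum.elim_comp_inl]
      have huev : ∀ jj, 1 ≤ jj → jj ≤ St → eval (Sum.elim a
          (fun i : Fin St => ∑ k ∈ Finset.Icc 1 ((i.1 + 1) * (s - 2) + 1), E k))
            (uVar n St jj) = ∑ k ∈ Finset.Icc 1 (jj * (s - 2) + 1), E k := by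
        intro jj h1 h2
        rw [uVar, dif_pos (by omega : jj - 1 < St)]
        simp only [eval_X, Sum.elim_inr]
        rw [show jj - 1 + 1 = jj by omega]
      rcases eq_or_ne j 1 with rfl | hj1
      · rw [splitPoly, if_pos rfl, map_add, map_sum]
        rw [huev 1 le_rfl hSt1]
        simp only [hMXev]
        rw [show 1 * (s - 2) + 1 = s - 1 by omega]
        exact CharTwo.add_self_eq_zero _
      rcases eq_or_ne j (St + 1) with rfl | hj2
      · rw [splitPoly, if_neg (by omega), if_pos rfl, map_add, map_sum]
        rw [huev St hSt1 le_rfl]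
        simp only [hMXev]
        have hsum := icc_concat E (St * (s - 2) + 1) t hA
        rw [show St * (s - 2) + 1 + 1 = St * (s - 2) + 2 by omega] at hsum
        linear_combination hsum + haE
      · rw [splitPoly, if_neg hj1, if_neg hj2, map_add, map_add, map_sum]
        rw [huev (j - 1) (by omega) (by omega), huev j (by omega) (by omega)]
        simp only [hMXev]
        have hle : (j - 1) * (s - 2) + 1 ≤ j * (s - 2) + 1 := by
          have := mul_le_mul_left (show j - 1 ≤ j by omega) (s - 2); omega
        have hsum := icc_concat E ((j - 1) * (s - 2) + 1) (j * (s - 2) + 1) hle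
        rw [show (j - 1) * (s - 2) + 1 + 1 = (j - 1) * (s - 2) + 2 by omega] at hsum
        have h2 := CharTwo.add_self_eq_zero (∑ k ∈ Finset.Icc 1 (j * (s - 2) + 1), E k)
        linear_combination hsum + h2
end

section
/- Let F = {f_1,...,f_r} be a set of Boolean polynomials in R_2[x_1,...,x_n] with t_i = #f_i, and fix s ≥ 3. Then the splitting system S(F,s) = ∪_i S(f_i,s) is s-sparse, consists of r + Σ_i ⌈(t_i - s)/(s-2)⌉ polynomials (with the convention ⌈e⌉ = 0 for e ≤ 0), involves n + Σ_i ⌈(t_i - s)/(s-2)⌉ variables, and satisfies proj_X V_{F_2}(S(F,s)) = V_{F_2}(F). -/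
open MvPolynomial Finset

/-- chunk boundaries: chunk `j` of a split polynomial covers monomial indices
`[dcut s t j, dcut s t (j+1))` (the last chunk runs up to `t`). -/
def dcut (s t : ℕ) : ℕ → ℕ
  | 0 => 0
  | j + 1 => min t (s - 1 + j * (s - 2))

lemma dcut_le_t (s t j : ℕ) : dcut s t j ≤ t := by
  cases j with
  | zero => simp [dcut]
  | succ j => simp [dcut]

lemma dcut_mono (s t j : ℕ) : dcut s t j ≤ dcut s t (j + 1) := by
  cases j with
  | zero => simp [dcut]
  | succ j =>
      have : j * (s - 2) ≤ (j + 1) * (s - 2) := Nat.mul_le_mul_right _ (by omega)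
      simp only [dcut]
      omega

lemma ceil_mul_ge (a q : ℕ) (hq : 0 < q) : a ≤ q * ((a + q - 1) / q) := by
  have h1 := Nat.div_add_mod (a + q - 1) q
  have h2 : (a + q - 1) % q < q := Nat.mod_lt _ hq
  generalize (a + q - 1) % q = R at h1 h2
  generalize q * ((a + q - 1) / q) = P at h1 ⊢
  omega

/-- the `j`-th polynomial of the splitting of a `t`-term polynomial with monomials
`mo 0, ..., mo (t-1)`, chained through auxiliary variables `u 0, ..., u (K-1)`. -/
noncomputable def blockPoly (n s t K : ℕ) {U : Type*} (mo : ℕ → (Fin n →₀ ℕ))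
    (u : Fin K → U) (j : ℕ) : MvPolynomial (Fin n ⊕ U) (ZMod 2) :=
  (∑ k ∈ Finset.Ico (dcut s t j) (if j = K then t else dcut s t (j + 1)),
      rename Sum.inl (monomial (mo k) (1 : ZMod 2)))
  + (if h : 0 < j ∧ j ≤ K then X (Sum.inr (u ⟨j - 1, by omega⟩)) else 0)
  + (if h : j < K then X (Sum.inr (u ⟨j, h⟩)) else 0)

lemma blockPoly_support_card (n s t K : ℕ) {U : Type*} (mo : ℕ → (Fin n →₀ ℕ))
    (u : Fin K → U) (j : ℕ) (hj : j ≤ K) (hs : 3 ≤ s)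
    (hK : K = ((t - s) + (s - 3)) / (s - 2)) :
    (blockPoly n s t K mo u j).support.card ≤ s := by
  classical
  have hKq : t - s ≤ (s - 2) * K := by
    rw [hK, show (t - s) + (s - 3) = (t - s) + (s - 2) - 1 by omega]
    exact ceil_mul_ge _ _ (by omega)
  have harith : ((if j = K then t else dcut s t (j + 1)) - dcut s t j)
      + (if 0 < j ∧ j ≤ K then 1 else 0) + (if j < K then 1 else 0) ≤ s := by
    by_cases hjK : j = K
    · subst hjK
      rcases j with _ | K'
      · rw [if_pos rfl, if_neg (by omega : ¬(0 < 0 ∧ 0 ≤ 0)), if_neg (by omega : ¬(0 < 0))]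
        rw [Nat.mul_zero] at hKq
        show t - 0 + 0 + 0 ≤ s
        omega
      · rw [if_pos rfl, if_pos (by omega : 0 < K' + 1 ∧ K' + 1 ≤ K' + 1),
          if_neg (lt_irrefl (K' + 1))]
        rw [Nat.mul_succ, mul_comm (s - 2) K'] at hKq
        show t - min t (s - 1 + K' * (s - 2)) + 1 + 0 ≤ s
        generalize K' * (s - 2) = P at hKq ⊢
        omega
    · have hjK' : j < K := by omega
      rcases j with _ | j'
      · rw [if_neg hjK, if_neg (by omega : ¬(0 < 0 ∧ 0 ≤ K)), if_pos hjK']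
        show min t (s - 1 + 0 * (s - 2)) - 0 + 0 + 1 ≤ s
        rw [Nat.zero_mul, Nat.add_zero]
        omega
      · rw [if_neg hjK, if_pos (by omega : 0 < j' + 1 ∧ j' + 1 ≤ K), if_pos hjK']
        show min t (s - 1 + (j' + 1) * (s - 2)) - min t (s - 1 + j' * (s - 2)) + 1 + 1 ≤ s
        rw [Nat.succ_mul]
        generalize j' * (s - 2) = P
        omega
  set P1 : MvPolynomial (Fin n ⊕ U) (ZMod 2) :=
    (∑ k ∈ Finset.Ico (dcut s t j) (if j = K then t else dcut s t (j + 1)),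
      rename Sum.inl (monomial (mo k) (1 : ZMod 2))) with hP1
  set P2 : MvPolynomial (Fin n ⊕ U) (ZMod 2) :=
    (if h : 0 < j ∧ j ≤ K then X (Sum.inr (u ⟨j - 1, by omega⟩)) else 0) with hP2
  set P3 : MvPolynomial (Fin n ⊕ U) (ZMod 2) :=
    (if h : j < K then X (Sum.inr (u ⟨j, h⟩)) else 0) with hP3
  have hsub : (blockPoly n s t K mo u j).support ⊆ (P1.support ∪ P2.support) ∪ P3.support := by
    refine support_add.trans (Finset.union_subset_union support_add le_rfl)
  have hc1 : P1.support.card ≤ (if j = K then t else dcut s t (j + 1)) - dcut s t j := by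
    refine le_trans (Finset.card_le_card support_sum) ?_
    refine le_trans Finset.card_biUnion_le ?_
    calc ∑ k ∈ Finset.Ico (dcut s t j) (if j = K then t else dcut s t (j + 1)),
          ((rename Sum.inl (monomial (mo k) (1 : ZMod 2))).support).card
        ≤ ∑ _k ∈ Finset.Ico (dcut s t j) (if j = K then t else dcut s t (j + 1)), 1 := by
          refine Finset.sum_le_sum fun k _ => ?_
          rw [rename_monomial, support_monomial]
          split <;> simp
      _ = _ := by simp [Nat.card_Ico]
  have hc2 : P2.support.card ≤ if 0 < j ∧ j ≤ K then 1 else 0 := by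
    rw [hP2]; split <;> simp [support_X]
  have hc3 : P3.support.card ≤ if j < K then 1 else 0 := by
    rw [hP3]; split <;> simp [support_X]
  have hcard : (blockPoly n s t K mo u j).support.card
      ≤ ((if j = K then t else dcut s t (j + 1)) - dcut s t j)
        + (if 0 < j ∧ j ≤ K then 1 else 0) + (if j < K then 1 else 0) := by
    refine le_trans (Finset.card_le_card hsub) ?_
    refine le_trans (Finset.card_union_le _ _) ?_
    refine le_trans (Nat.add_le_add_right (Finset.card_union_le _ _) _) ?_
    omega
  exact le_trans hcard harith

lemma blockPoly_eval (n s t K : ℕ) {U : Type*} (mo : ℕ → (Fin n →₀ ℕ)) (u : Fin K → U)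
    (a : Fin n → ZMod 2) (b : U → ZMod 2) (j : ℕ) :
    eval (Sum.elim a b) (blockPoly n s t K mo u j)
      = ((if j = K then (∑ k ∈ Finset.range t, eval a (monomial (mo k) (1 : ZMod 2)))
            else ∑ k ∈ Finset.range (dcut s t (j + 1)), eval a (monomial (mo k) (1 : ZMod 2)))
          - ∑ k ∈ Finset.range (dcut s t j), eval a (monomial (mo k) (1 : ZMod 2)))
        + (if h : 0 < j ∧ j ≤ K then b (u ⟨j - 1, by omega⟩) else 0)
        + (if h : j < K then b (u ⟨j, h⟩) else 0) := by
  have hle : dcut s t j ≤ (if j = K then t else dcut s t (j + 1)) := by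
    split
    · exact dcut_le_t s t j
    · exact dcut_mono s t j
  rw [blockPoly, map_add, map_add, map_sum]
  simp only [eval_rename, Sum.elim_comp_inl]
  rw [Finset.sum_Ico_eq_sub _ hle]
  simp only [apply_dite (eval (Sum.elim a b)), eval_X, Sum.elim_inr, map_zero]
  congr 1
  congr 1
  rw [apply_ite (fun c => ∑ k ∈ Finset.range c, eval a (monomial (mo k) (1 : ZMod 2)))]

/-- evaluation, in the shape matching `block_chain` with
`c = fun k => if h : k < K then b (u ⟨k, h⟩) else 0`. -/
lemma blockPoly_eval' (n s t K : ℕ) {U : Type*} (mo : ℕ → (Fin n →₀ ℕ)) (u : Fin K → U)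
    (a : Fin n → ZMod 2) (b : U → ZMod 2) (j : ℕ) :
    eval (Sum.elim a b) (blockPoly n s t K mo u j)
      = ((if j = K then (∑ k ∈ Finset.range t, eval a (monomial (mo k) (1 : ZMod 2)))
            else ∑ k ∈ Finset.range (dcut s t (j + 1)), eval a (monomial (mo k) (1 : ZMod 2)))
          - ∑ k ∈ Finset.range (dcut s t j), eval a (monomial (mo k) (1 : ZMod 2)))
        + (if 0 < j ∧ j ≤ K then (if h : j - 1 < K then b (u ⟨j - 1, h⟩) else 0) else 0)
        + (if j < K then (if h : j < K then b (u ⟨j, h⟩) else 0) else 0) := by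
  rw [blockPoly_eval]
  congr 1
  · congr 1
    by_cases h : 0 < j ∧ j ≤ K
    · rw [dif_pos h, if_pos h, dif_pos (by omega : j - 1 < K)]
    · rw [dif_neg h, if_neg h]
  · by_cases h : j < K
    · rw [dif_pos h, if_pos h]
    · rw [dif_neg h, if_neg h]

section chain

lemma zlem1 : ∀ x y : ZMod 2, x - 0 + 0 + y = 0 → y = x := by decide
lemma zlem2 : ∀ a b y : ZMod 2, a - b + b + y = 0 → y = a := by decide
lemma zlem3 : ∀ t g : ZMod 2, t - g + g + 0 = 0 → t = 0 := by decide
lemma zlem4 : ∀ t : ZMod 2, t - 0 + 0 + 0 = 0 → t = 0 := by decide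
lemma zlem5 : ∀ g : ZMod 2, (0 : ZMod 2) - g + g + 0 = 0 := by decide
lemma zlem6 : ∀ x y : ZMod 2, x - y + y + x = 0 := by decide
lemma zlem7 : ∀ x : ZMod 2, x - 0 + 0 + x = 0 := by decide

lemma block_chain (K : ℕ) (g : ℕ → ZMod 2) (T : ZMod 2) (hg0 : g 0 = 0) :
    (∃ c : ℕ → ZMod 2, ∀ j ≤ K,
        ((if j = K then T else g (j + 1)) - g j
          + (if 0 < j ∧ j ≤ K then c (j - 1) else 0)
          + (if j < K then c j else 0)) = 0)
    ↔ T = 0 := by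
  constructor
  · rintro ⟨c, hc⟩
    have aux : ∀ j, j < K → c j = g (j + 1) := by
      intro j
      induction j with
      | zero =>
          intro h
          have h0 := hc 0 (le_of_lt h)
          rw [if_neg (by omega), if_neg (by omega), if_pos h, hg0] at h0
          exact zlem1 _ _ h0
      | succ j ih =>
          intro h
          have hj := hc (j + 1) (le_of_lt h)
          rw [if_neg (by omega), if_pos (by omega), if_pos h, Nat.add_sub_cancel,
            ih (by omega)] at hj
          exact zlem2 _ _ _ hj
    have hK := hc K le_rfl
    rw [if_pos rfl, if_neg (lt_irrefl K)] at hK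
    by_cases h0 : 0 < K
    · rw [if_pos ⟨h0, le_rfl⟩, aux (K - 1) (by omega), show K - 1 + 1 = K from by omega] at hK
      exact zlem3 _ _ hK
    · rw [if_neg (by omega), show K = 0 from by omega, hg0] at hK
      exact zlem4 _ hK
  · intro hT
    refine ⟨fun k => g (k + 1), ?_⟩
    intro j hj
    by_cases hjK : j = K
    · subst hjK
      rw [if_pos rfl, if_neg (lt_irrefl j), hT]
      by_cases h0 : 0 < j
      · rw [if_pos ⟨h0, le_rfl⟩]
        show 0 - g j + g (j - 1 + 1) + 0 = 0
        rw [show j - 1 + 1 = j from by omega]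
        exact zlem5 _
      · rw [if_neg (by omega), show j = 0 from by omega, hg0]
        decide
    · have hjK' : j < K := by omega
      rw [if_neg hjK, if_pos hjK']
      by_cases h0 : 0 < j
      · rw [if_pos ⟨h0, hj⟩]
        show g (j + 1) - g j + g (j - 1 + 1) + g (j + 1) = 0
        rw [show j - 1 + 1 = j from by omega]
        exact zlem6 _ _
      · rw [if_neg (by omega), show j = 0 from by omega, hg0]
        exact zlem7 _

end chain

/-- an enumeration of the monomials of a `t`-term Boolean polynomial. -/
noncomputable def sysMo (n : ℕ) (Mi : Finset (Fin n →₀ ℕ)) : ℕ → (Fin n →₀ ℕ) :=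
  fun k => if h : k < Mi.card then (Mi.equivFin.symm ⟨k, h⟩ : (Fin n →₀ ℕ)) else 0

lemma sysMo_sum {n : ℕ} (Mi : Finset (Fin n →₀ ℕ)) {A : Type*} [AddCommMonoid A]
    (f : (Fin n →₀ ℕ) → A) :
    ∑ k ∈ Finset.range Mi.card, f (sysMo n Mi k) = ∑ m ∈ Mi, f m := by
  rw [← Fin.sum_univ_eq_sum_range, ← Finset.sum_coe_sort Mi f,
    ← Equiv.sum_comp Mi.equivFin.symm (fun x => f x)]
  apply Finset.sum_congr rfl
  intro k _
  simp [sysMo]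

/-- Splitting a system of Boolean polynomials `f_i = Σ_{m ∈ M i} m` (each a sum of
`t_i = #(M i)` distinct squarefree monomials): there is an `s`-sparse system `S(F,s)` of
`r + Σ_i ⌈(t_i - s)/(s-2)⌉` polynomials in `n + Σ_i ⌈(t_i - s)/(s-2)⌉` variables (with
`⌈e⌉ = 0` for `e ≤ 0`) whose solution set over `F_2`, projected to the `X`-coordinates,
equals the solution set of `F`. -/
theorem splitting_system_properties
    (n r s : ℕ) (hs : 3 ≤ s) (M : Fin r → Finset (Fin n →₀ ℕ))
    (hsf : ∀ i, ∀ m ∈ M i, ∀ j, m j ≤ 1) :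
    ∃ S : Fin (r + ∑ i, (((M i).card - s) + (s - 3)) / (s - 2)) →
        MvPolynomial (Fin n ⊕ Fin (∑ i, (((M i).card - s) + (s - 3)) / (s - 2))) (ZMod 2),
      (∀ j, (S j).support.card ≤ s) ∧
      ({a : Fin n → ZMod 2 |
          ∃ b : Fin (∑ i, (((M i).card - s) + (s - 3)) / (s - 2)) → ZMod 2,
            ∀ j, eval (Sum.elim a b) (S j) = 0}
        = {a : Fin n → ZMod 2 | ∀ i, eval a (∑ m ∈ M i, monomial m (1 : ZMod 2)) = 0}) := by
  classical
  set Kc : Fin r → ℕ := fun i => (((M i).card - s) + (s - 3)) / (s - 2) with hKcdef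
  have hcard1 : Fintype.card ((i : Fin r) × Fin (Kc i)) = ∑ i, Kc i := by
    simp [Fintype.card_sigma]
  have hcard2 : Fintype.card ((i : Fin r) × Fin (Kc i + 1)) = r + ∑ i, Kc i := by
    rw [Fintype.card_sigma]
    simp only [Fintype.card_fin]
    rw [Finset.sum_add_distrib]
    simp [add_comm]
  have e1 := Fintype.equivFinOfCardEq hcard1
  have e2 := Fintype.equivFinOfCardEq hcard2
  refine ⟨fun j => blockPoly n s (M (e2.symm j).1).card (Kc (e2.symm j).1)
      (sysMo n (M (e2.symm j).1)) (fun k => e1 ⟨(e2.symm j).1, k⟩) ((e2.symm j).2 : ℕ),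
    ?_, ?_⟩
  · intro j
    exact blockPoly_support_card _ _ _ _ _ _ _
      (Nat.lt_succ_iff.mp (e2.symm j).2.isLt) hs (congrFun hKcdef _)
  · ext a
    simp only [Set.mem_setOf_eq]
    constructor
    · rintro ⟨b, hb⟩ i
      have hQ : ∀ p : (i : Fin r) × Fin (Kc i + 1),
          eval (Sum.elim a b) (blockPoly n s (M p.1).card (Kc p.1)
            (sysMo n (M p.1)) (fun k => e1 ⟨p.1, k⟩) (p.2 : ℕ)) = 0 := by
        intro p
        have h0 := hb (e2 p)
        rwa [Equiv.symm_apply_apply] at h0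
      have hchain := (block_chain (Kc i)
          (fun c => ∑ k ∈ Finset.range (dcut s (M i).card c),
            eval a (monomial (sysMo n (M i) k) (1 : ZMod 2)))
          (∑ k ∈ Finset.range (M i).card, eval a (monomial (sysMo n (M i) k) (1 : ZMod 2)))
          (by simp [dcut])).mp ?_
      · rw [sysMo_sum (M i) (fun m => eval a (monomial m (1 : ZMod 2)))] at hchain
        rw [map_sum]
        exact hchain
      · refine ⟨fun k => if h : k < Kc i then b (e1 ⟨i, ⟨k, h⟩⟩) else 0, ?_⟩
        intro j hj
        have h0 := hQ ⟨i, ⟨j, Nat.lt_succ_of_le hj⟩⟩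
        rw [blockPoly_eval'] at h0
        exact h0
    · intro h
      have hchain : ∀ i, ∃ c : ℕ → ZMod 2, ∀ j ≤ Kc i,
          ((if j = Kc i then (∑ k ∈ Finset.range (M i).card,
                eval a (monomial (sysMo n (M i) k) (1 : ZMod 2)))
              else ∑ k ∈ Finset.range (dcut s (M i).card (j + 1)),
                eval a (monomial (sysMo n (M i) k) (1 : ZMod 2)))
            - ∑ k ∈ Finset.range (dcut s (M i).card j),
                eval a (monomial (sysMo n (M i) k) (1 : ZMod 2))
            + (if 0 < j ∧ j ≤ Kc i then c (j - 1) else 0)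
            + (if j < Kc i then c j else 0)) = 0 := by
        intro i
        refine (block_chain (Kc i) _ _ (by simp [dcut]; rfl)).mpr ?_
        rw [sysMo_sum (M i) (fun m => eval a (monomial m (1 : ZMod 2))), ← map_sum]
        exact h i
      choose c hc using hchain
      refine ⟨fun v => c (e1.symm v).1 ((e1.symm v).2 : ℕ), ?_⟩
      intro j
      show eval _ (blockPoly n s (M (e2.symm j).1).card (Kc (e2.symm j).1)
        (sysMo n (M (e2.symm j).1)) (fun k => e1 ⟨(e2.symm j).1, k⟩) ((e2.symm j).2 : ℕ)) = 0
      generalize e2.symm j = p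
      obtain ⟨i, jj⟩ := p
      rw [blockPoly_eval']
      have hb' : ∀ (k : ℕ) (hk : k < Kc i),
          (fun v => c (e1.symm v).1 ((e1.symm v).2 : ℕ)) (e1 ⟨i, ⟨k, hk⟩⟩) = c i k := by
        intro k hk
        show c (e1.symm (e1 ⟨i, ⟨k, hk⟩⟩)).fst ((e1.symm (e1 ⟨i, ⟨k, hk⟩⟩)).snd : ℕ) = c i k
        rw [Equiv.symm_apply_apply e1 ⟨i, ⟨k, hk⟩⟩]
      have hj : (jj : ℕ) ≤ Kc i := Nat.lt_succ_iff.mp jj.isLt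
      have hkey := hc i (jj : ℕ) hj
      refine Eq.trans ?_ hkey
      congr 1
      · congr 1
        by_cases hcond : 0 < (jj : ℕ) ∧ (jj : ℕ) ≤ Kc i
        · rw [if_pos hcond, if_pos hcond, dif_pos (by omega : (jj : ℕ) - 1 < Kc i)]
          exact hb' _ _
        · rw [if_neg hcond, if_neg hcond]
      · by_cases hcond : (jj : ℕ) < Kc i
        · rw [if_pos hcond, if_pos hcond, dif_pos hcond]
          exact hb' _ _
        · rw [if_neg hcond, if_neg hcond]
end

section
/- Let I = (F) ⊂ C[x_1,...,x_n] be a radical zero-dimensional ideal with finite zero set {a_1,...,a_w}, and let D ≥ csdeg(F). Then every solution of the Macaulay linear system M_{F,D} m_D = b_{F,D} restricted to the coordinates indexed by monomials of degree ≤ D is of the form Σ_{i=1}^w η_i m_D(a_i) with Σ_i η_i = 1, where m_D(a_i) is the vector of values at a_i of all nonconstant monomials of degree ≤ D; conversely every such affine combination is a solution. (Coordinates indexed by monomials of degree > D are unconstrained.) -/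
open MvPolynomial

namespace Drl

variable {n : ℕ}

theorem drl_irrefl (a : Fin n →₀ ℕ) : ¬ DrlLt a a := by
  rintro (h | ⟨-, i, hi, -⟩)
  · exact lt_irrefl _ h
  · exact lt_irrefl _ hi

theorem drl_trans {a b c : Fin n →₀ ℕ} (hab : DrlLt a b) (hbc : DrlLt b c) : DrlLt a c := by
  rcases hab with h1 | ⟨e1, i, hi, hji⟩
  · rcases hbc with h2 | ⟨e2, _⟩
    · exact Or.inl (h1.trans h2)
    · exact Or.inl (e2 ▸ h1)
  · rcases hbc with h2 | ⟨e2, k, hk, hjk⟩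
    · exact Or.inl (e1 ▸ h2)
    · refine Or.inr ⟨e1.trans e2, ?_⟩
      rcases lt_trichotomy i k with h | h | h
      · exact ⟨k, by rw [hji k h]; exact hk, fun j hj => (hji j (h.trans hj)).trans (hjk j hj)⟩
      · subst h
        exact ⟨i, hk.trans hi, fun j hj => (hji j hj).trans (hjk j hj)⟩
      · exact ⟨i, by rw [← hjk i h]; exact hi, fun j hj => (hji j hj).trans (hjk j (h.trans hj))⟩

theorem drl_trichotomy (a b : Fin n →₀ ℕ) : a = b ∨ DrlLt a b ∨ DrlLt b a := by
  by_cases hab : a = b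
  · exact Or.inl hab
  rcases lt_trichotomy (∑ i, a i) (∑ i, b i) with h | h | h
  · exact Or.inr (Or.inl (Or.inl h))
  · right
    have hne : (Finset.univ.filter (fun j => a j ≠ b j)).Nonempty := by
      by_contra hc
      apply hab
      rw [Finset.not_nonempty_iff_eq_empty, Finset.filter_eq_empty_iff] at hc
      ext j
      exact not_ne_iff.mp (hc (Finset.mem_univ j))
    set i := (Finset.univ.filter (fun j => a j ≠ b j)).max' hne with hidef
    have hi : a i ≠ b i := by
      have := (Finset.univ.filter (fun j => a j ≠ b j)).max'_mem hne
      simpa using this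
    have hgt : ∀ j, i < j → a j = b j := by
      intro j hj
      by_contra hne'
      exact absurd (Finset.le_max' _ j (by simpa using hne')) (not_le.mpr hj)
    rcases lt_or_gt_of_ne hi with h' | h'
    · exact Or.inr (Or.inr ⟨h.symm, i, h', fun j hj => (hgt j hj).symm⟩)
    · exact Or.inl (Or.inr ⟨h, i, h', hgt⟩)
  · exact Or.inr (Or.inr (Or.inl h))

theorem drl_deg_le {a b : Fin n →₀ ℕ} (h : DrlLt a b) : (∑ i, a i) ≤ ∑ i, b i := by
  rcases h with h | ⟨h, -⟩
  · exact h.le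
  · exact h.le

theorem drl_add_right {a b : Fin n →₀ ℕ} (c : Fin n →₀ ℕ) (h : DrlLt a b) :
    DrlLt (a + c) (b + c) := by
  have hsum : ∀ x : Fin n →₀ ℕ, (∑ i, (x + c) i) = (∑ i, x i) + ∑ i, c i := by
    intro x
    simp [Finsupp.add_apply, Finset.sum_add_distrib]
  rcases h with h | ⟨h, i, hi, hji⟩
  · exact Or.inl (by rw [hsum, hsum]; omega)
  · refine Or.inr ⟨by rw [hsum, hsum, h], i, ?_, fun j hj => ?_⟩
    · simpa [Finsupp.add_apply] using hi
    · simp [Finsupp.add_apply, hji j hj]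

/-- a "≤" version -/
def DrlLe (a b : Fin n →₀ ℕ) : Prop := a = b ∨ DrlLt a b

theorem drlLe_add_right {a b : Fin n →₀ ℕ} (c : Fin n →₀ ℕ) (h : DrlLe a b) :
    DrlLe (a + c) (b + c) := by
  rcases h with rfl | h
  · exact Or.inl rfl
  · exact Or.inr (drl_add_right c h)

theorem drlLe_add {a b a' b' : Fin n →₀ ℕ} (h : DrlLe a b) (h' : DrlLe a' b') :
    DrlLe (a + a') (b + b') := by
  have h1 : DrlLe (a + a') (b + a') := drlLe_add_right a' h
  have h2 : DrlLe (b + a') (b + b') := by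
    rw [add_comm b a', add_comm b b']
    exact drlLe_add_right b h'
  rcases h1 with e1 | l1 <;> rcases h2 with e2 | l2
  · exact Or.inl (e1.trans e2)
  · exact Or.inr (e1 ▸ l2)
  · exact Or.inr (e2 ▸ l1)
  · exact Or.inr (drl_trans l1 l2)

theorem drl_wf : WellFounded (@DrlLt n) := by
  constructor
  intro a
  have hfin : {x : Fin n →₀ ℕ | (∑ i, x i) ≤ ∑ i, a i}.Finite := by
    set d := ∑ i, a i
    have : Function.Injective
        (fun x : {x : Fin n →₀ ℕ | (∑ i, x i) ≤ d} => (fun i => (⟨min (x.1 i) d, by omega⟩ : Fin (d+1)))) := by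
      intro x y hxy
      have hx : ∀ i, x.1 i ≤ d := fun i => le_trans (Finset.single_le_sum (f := fun i => x.1 i) (fun _ _ => Nat.zero_le _) (Finset.mem_univ i)) x.2
      have hy : ∀ i, y.1 i ≤ d := fun i => le_trans (Finset.single_le_sum (f := fun i => y.1 i) (fun _ _ => Nat.zero_le _) (Finset.mem_univ i)) y.2
      apply Subtype.ext
      ext i
      have := congrFun hxy i
      simp only [Fin.mk.injEq] at this
      rw [min_eq_left (hx i), min_eq_left (hy i)] at this
      exact this
    have := Finite.of_injective _ this
    exact Set.toFinite _
  haveI : IsStrictOrder (Fin n →₀ ℕ) DrlLt :=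
    { irrefl := drl_irrefl, trans := fun _ _ _ => drl_trans }
  have hwf := hfin.wellFoundedOn (r := DrlLt)
  have key : ∀ x ∈ {x : Fin n →₀ ℕ | (∑ i, x i) ≤ ∑ i, a i}, Acc DrlLt x :=
    fun x hx => hwf.induction hx (fun y hy IH => Acc.intro _ (fun b hb =>
      IH b (show (∑ i, b i) ≤ _ from le_trans (drl_deg_le hb) hy) hb))
  exact key a (show (∑ i, a i) ≤ _ from le_rfl)

theorem finset_exists_max (s : Finset (Fin n →₀ ℕ)) (hs : s.Nonempty) :
    ∃ m ∈ s, ∀ m' ∈ s, m' ≠ m → DrlLt m' m := by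
  classical
  induction s using Finset.induction_on with
  | empty => exact absurd hs (by simp)
  | @insert x t hnotmem IH =>
    rcases t.eq_empty_or_nonempty with rfl | ht
    · exact ⟨x, by simp, by simp⟩
    · obtain ⟨m, hm, hmax⟩ := IH ht
      rcases drl_trichotomy x m with rfl | h | h
      · refine ⟨x, by simp, fun m' hm' hne => ?_⟩
        rcases Finset.mem_insert.mp hm' with rfl | h'
        · exact absurd rfl hne
        · exact hmax m' h' hne
      · refine ⟨m, by simp [hm], fun m' hm' hne => ?_⟩
        rcases Finset.mem_insert.mp hm' with rfl | h'
        · exact h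
        · exact hmax m' h' hne
      · refine ⟨x, by simp, fun m' hm' hne => ?_⟩
        rcases Finset.mem_insert.mp hm' with rfl | h'
        · exact absurd rfl hne
        · by_cases hx : m' = m
          · exact hx ▸ h
          · exact drl_trans (hmax m' h' hx) h

theorem exists_lm {f : MvPolynomial (Fin n) ℂ} (hf : f ≠ 0) : ∃ m, IsLeadingMonomial f m := by
  obtain ⟨m, hm, hmax⟩ := finset_exists_max f.support (by simpa using hf)
  exact ⟨m, hm, hmax⟩

theorem lm_unique {f : MvPolynomial (Fin n) ℂ} {m m' : Fin n →₀ ℕ}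
    (h : IsLeadingMonomial f m) (h' : IsLeadingMonomial f m') : m = m' := by
  by_contra hne
  exact drl_irrefl m (drl_trans (h'.2 m h.1 hne) (h.2 m' h'.1 (Ne.symm hne)))

theorem degEq (m : Fin n →₀ ℕ) : (m.sum fun _ e => e) = ∑ i, m i :=
  Finsupp.sum_fintype _ _ (fun _ => rfl)

theorem deg_lm {f : MvPolynomial (Fin n) ℂ} {m : Fin n →₀ ℕ}
    (h : IsLeadingMonomial f m) : f.totalDegree = ∑ i, m i := by
  apply le_antisymm
  · rw [totalDegree]
    apply Finset.sup_le
    intro m' hm'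
    rw [degEq]
    by_cases hne : m' = m
    · subst hne; exact le_rfl
    · exact drl_deg_le (h.2 m' hm' hne)
  · rw [← degEq]
    exact le_totalDegree h.1

end Drl

namespace Drl

variable {n : ℕ}

theorem lm_mul {p q : MvPolynomial (Fin n) ℂ} {mp mq : Fin n →₀ ℕ}
    (hp : IsLeadingMonomial p mp) (hq : IsLeadingMonomial q mq) :
    IsLeadingMonomial (p * q) (mp + mq) ∧
      (p * q).coeff (mp + mq) = p.coeff mp * q.coeff mq := by
  classical
  have hcoeff : (p * q).coeff (mp + mq) = p.coeff mp * q.coeff mq := by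
    rw [coeff_mul]
    apply Finset.sum_eq_single (mp, mq)
    · rintro ⟨u, v⟩ hb hne
      have huv : u + v = mp + mq := Finset.HasAntidiagonal.mem_antidiagonal.mp hb
      by_cases hu : u ∈ p.support
      · by_cases hv : v ∈ q.support
        · exfalso
          have hule : DrlLe u mp := by
            by_cases h : u = mp
            · exact Or.inl h
            · exact Or.inr (hp.2 u hu h)
          have hvle : DrlLe v mq := by
            by_cases h : v = mq
            · exact Or.inl h
            · exact Or.inr (hq.2 v hv h)
          by_cases h : u = mp
          · subst h
            have : v = mq := by
              have := huv
              exact add_left_cancel this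
            exact hne (by rw [this])
          · have h1 : DrlLt (u + v) (mp + v) := drl_add_right v (hp.2 u hu h)
            have h2 : DrlLe (mp + v) (mp + mq) := by
              rw [add_comm mp v, add_comm mp mq]
              exact drlLe_add_right mp hvle
            have h3 : DrlLt (u + v) (mp + mq) := by
              rcases h2 with e | l
              · exact e ▸ h1
              · exact drl_trans h1 l
            rw [huv] at h3
            exact drl_irrefl _ h3
        · rw [notMem_support_iff.mp hv, mul_zero]
      · rw [notMem_support_iff.mp hu, zero_mul]
    · intro h
      simp at h
  have hmem : mp + mq ∈ (p * q).support := by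
    rw [mem_support_iff, hcoeff]
    exact mul_ne_zero (mem_support_iff.mp hp.1) (mem_support_iff.mp hq.1)
  refine ⟨⟨hmem, ?_⟩, hcoeff⟩
  intro m'' hm'' hne
  have h0 : (p * q).coeff m'' ≠ 0 := mem_support_iff.mp hm''
  rw [coeff_mul] at h0
  obtain ⟨⟨u, v⟩, hb, hnz⟩ := Finset.exists_ne_zero_of_sum_ne_zero h0
  have huv : u + v = m'' := Finset.HasAntidiagonal.mem_antidiagonal.mp hb
  have hu : u ∈ p.support := mem_support_iff.mpr (fun h => hnz (by rw [h, zero_mul]))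
  have hv : v ∈ q.support := mem_support_iff.mpr (fun h => hnz (by rw [h, mul_zero]))
  have hule : DrlLe u mp := by
    by_cases h : u = mp
    · exact Or.inl h
    · exact Or.inr (hp.2 u hu h)
  have hvle : DrlLe v mq := by
    by_cases h : v = mq
    · exact Or.inl h
    · exact Or.inr (hq.2 v hv h)
  have := drlLe_add hule hvle
  rw [huv] at this
  rcases this with e | l
  · exact absurd e hne
  · exact l

theorem lm_monomial (k : Fin n →₀ ℕ) : IsLeadingMonomial (monomial k (1:ℂ)) k := by
  classical
  constructor
  · rw [mem_support_iff, coeff_monomial, if_pos rfl]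
    exact one_ne_zero
  · intro m' hm' hne
    rw [mem_support_iff, coeff_monomial] at hm'
    rcases em (k = m') with rfl | h
    · exact absurd rfl hne
    · rw [if_neg h] at hm'
      exact absurd rfl hm'

theorem lm_monomial_mul {g : MvPolynomial (Fin n) ℂ} {mg : Fin n →₀ ℕ} (k : Fin n →₀ ℕ)
    (hg : IsLeadingMonomial g mg) :
    IsLeadingMonomial (monomial k (1:ℂ) * g) (k + mg) ∧
      (monomial k (1:ℂ) * g).coeff (k + mg) = g.coeff mg := by
  obtain ⟨h1, h2⟩ := lm_mul (lm_monomial k) hg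
  refine ⟨h1, ?_⟩
  rw [h2, coeff_monomial, if_pos rfl, one_mul]

theorem totalDegree_mul_eq {p q : MvPolynomial (Fin n) ℂ} (hp : p ≠ 0) (hq : q ≠ 0) :
    (p * q).totalDegree = p.totalDegree + q.totalDegree := by
  obtain ⟨mp, hmp⟩ := exists_lm hp
  obtain ⟨mq, hmq⟩ := exists_lm hq
  rw [deg_lm hmp, deg_lm hmq, deg_lm (lm_mul hmp hmq).1]
  simp [Finsupp.add_apply, Finset.sum_add_distrib]

section IdealStuff

variable (I : Ideal (MvPolynomial (Fin n) ℂ))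

def lmSet : Set (Fin n →₀ ℕ) := {m | ∃ f ∈ I, f ≠ 0 ∧ IsLeadingMonomial f m}

variable {I}

theorem lmSet_monic {m : Fin n →₀ ℕ} (hm : m ∈ lmSet I) :
    ∃ f ∈ I, f.coeff m = 1 ∧ IsLeadingMonomial f m := by
  obtain ⟨f, hfI, hf0, hlm⟩ := hm
  have hc : f.coeff m ≠ 0 := mem_support_iff.mp hlm.1
  refine ⟨(f.coeff m)⁻¹ • f, ?_, ?_, ?_, ?_⟩
  · rw [smul_eq_C_mul]
    exact I.mul_mem_left _ hfI
  · rw [coeff_smul, smul_eq_mul, inv_mul_cancel₀ hc]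
  · rw [mem_support_iff, coeff_smul, smul_eq_mul, inv_mul_cancel₀ hc]
    exact one_ne_zero
  · intro m' hm' hne
    have : f.coeff m' ≠ 0 := by
      rw [mem_support_iff, coeff_smul, smul_eq_mul] at hm'
      intro h
      rw [h, mul_zero] at hm'
      exact hm' rfl
    exact hlm.2 m' (mem_support_iff.mpr this) hne

theorem lmSet_upclosed {m m' : Fin n →₀ ℕ} (hm : m ∈ lmSet I) (hle : m ≤ m') :
    m' ∈ lmSet I := by
  obtain ⟨f, hfI, hc, hlm⟩ := lmSet_monic hm
  obtain ⟨hlm', hc'⟩ := lm_monomial_mul (m' - m) hlm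
  have heq : m' - m + m = m' := tsub_add_cancel_of_le hle
  rw [heq] at hlm' hc'
  refine ⟨monomial (m' - m) (1:ℂ) * f, I.mul_mem_left _ hfI, ?_, hlm'⟩
  intro h0
  rw [h0] at hc'
  rw [hc] at hc'
  simp at hc'

variable (I)

def minLM : Set (Fin n →₀ ℕ) := {m | m ∈ lmSet I ∧ ∀ m' ∈ lmSet I, m' ≤ m → m' = m}

theorem minLM_finite : (minLM I).Finite := by
  have hanti : IsAntichain (· ≤ ·) (minLM I) := by
    intro x hx y hy hne hle
    exact hne (hy.2 x hx.1 hle)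
  exact hanti.finite_of_partiallyWellOrderedOn (Set.isPWO_of_wellQuasiOrderedLE _)

variable {I}

theorem exists_min_le : ∀ m ∈ lmSet I, ∃ m₀ ∈ minLM I, m₀ ≤ m := by
  have : ∀ m : Fin n →₀ ℕ, m ∈ lmSet I → ∃ m₀ ∈ minLM I, m₀ ≤ m := by
    intro m
    induction m using WellFoundedLT.induction with
    | ind m IH =>
      intro hm
      by_cases hmin : ∀ m' ∈ lmSet I, m' ≤ m → m' = m
      · exact ⟨m, ⟨hm, hmin⟩, le_rfl⟩
      · push_neg at hmin
        obtain ⟨m', hm', hle, hne⟩ := hmin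
        obtain ⟨m₀, h₀, hle'⟩ := IH m' (lt_of_le_of_ne hle hne) hm'
        exact ⟨m₀, h₀, hle'.trans hle⟩
  exact this

theorem nf_exists (I : Ideal (MvPolynomial (Fin n) ℂ)) :
    ∀ m : Fin n →₀ ℕ, ∃ r : MvPolynomial (Fin n) ℂ,
    ((monomial m (1:ℂ)) - r) ∈ I ∧ (∀ m' ∈ r.support, m' ∉ lmSet I) ∧
    (∀ m' ∈ r.support, DrlLe m' m) := by
  classical
  intro m
  induction m using drl_wf.induction with
  | _ m IH =>
    by_cases hm : m ∈ lmSet I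
    · obtain ⟨f, hfI, hf1, hflm⟩ := lmSet_monic hm
      set q : MvPolynomial (Fin n) ℂ := monomial m (1:ℂ) - f with hq
      have hqsupp : ∀ m' ∈ q.support, DrlLt m' m := by
        intro m' hm'
        have hne : m' ≠ m := by
          rintro rfl
          have : q.coeff m' = 0 := by
            rw [hq, coeff_sub, coeff_monomial, if_pos rfl, hf1, sub_self]
          exact mem_support_iff.mp hm' this
        have h1 := support_sub _ _ _ hm'
        rcases Finset.mem_union.mp h1 with h2 | h2
        · rw [mem_support_iff, coeff_monomial] at h2
          rcases em (m = m') with rfl | h3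
          · exact absurd rfl hne
          · rw [if_neg h3] at h2
            exact absurd rfl h2
        · exact hflm.2 m' h2 hne
      choose R hR1 hR2 hR3 using fun (x : q.support) => IH x.1 (hqsupp x.1 x.2)
      set r : MvPolynomial (Fin n) ℂ := ∑ x ∈ q.support.attach, q.coeff x.1 • R x
      have hkey : monomial m (1:ℂ) - r =
          f + ∑ x ∈ q.support.attach, q.coeff x.1 • (monomial x.1 (1:ℂ) - R x) := by
        have hq' : q = ∑ x ∈ q.support.attach, q.coeff x.1 • monomial x.1 (1:ℂ) := by
          conv_lhs => rw [q.as_sum]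
          rw [← Finset.sum_attach q.support (fun v => monomial v (q.coeff v))]
          apply Finset.sum_congr rfl
          intro x _
          rw [smul_monomial, smul_eq_mul, mul_one]
        have : ∑ x ∈ q.support.attach, q.coeff x.1 • (monomial x.1 (1:ℂ) - R x) = q - r := by
          rw [Finset.sum_congr rfl (fun x _ => smul_sub (q.coeff x.1) (monomial x.1 (1:ℂ)) (R x)),
            Finset.sum_sub_distrib, ← hq']
        rw [this, hq]
        ring
      refine ⟨r, ?_, ?_, ?_⟩
      · rw [hkey]
        exact I.add_mem hfI (Submodule.sum_mem _ (fun x _ =>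
          by rw [smul_eq_C_mul]; exact I.mul_mem_left _ (hR1 x)))
      · intro m' hm'
        have := support_sum hm'
        obtain ⟨x, -, hx⟩ := Finset.mem_biUnion.mp this
        exact hR2 x m' (support_smul hx)
      · intro m' hm'
        have := support_sum hm'
        obtain ⟨x, -, hx⟩ := Finset.mem_biUnion.mp this
        have h1 : DrlLe m' x.1 := hR3 x m' (support_smul hx)
        have h2 : DrlLt x.1 m := hqsupp x.1 x.2
        rcases h1 with rfl | h1
        · exact Or.inr h2
        · exact Or.inr (drl_trans h1 h2)
    · refine ⟨monomial m (1:ℂ), by simp [I.zero_mem], ?_, ?_⟩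
      · intro m' hm'
        rw [mem_support_iff, coeff_monomial] at hm'
        rcases em (m = m') with rfl | h3
        · exact hm
        · rw [if_neg h3] at hm'
          exact absurd rfl hm'
      · intro m' hm'
        rw [mem_support_iff, coeff_monomial] at hm'
        rcases em (m = m') with rfl | h3
        · exact Or.inl rfl
        · rw [if_neg h3] at hm'
          exact absurd rfl hm'

end IdealStuff

end Drl



namespace Drl

variable {n : ℕ}

theorem reduce_span {I : Ideal (MvPolynomial (Fin n) ℂ)} {G : Finset (MvPolynomial (Fin n) ℂ)}
    (hGI : ∀ g ∈ G, g ∈ I)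
    (hmonic : ∀ g ∈ G, ∃ mg, IsLeadingMonomial g mg ∧ g.coeff mg = 1)
    (hdiv : ∀ f ∈ I, f ≠ (0 : MvPolynomial (Fin n) ℂ) →
      ∃ g ∈ G, ∃ mg mf : Fin n →₀ ℕ,
        IsLeadingMonomial g mg ∧ IsLeadingMonomial f mf ∧ ∀ i, mg i ≤ mf i)
    (D' : ℕ) :
    ∀ f ∈ I, f.totalDegree ≤ D' →
      f ∈ Submodule.span ℂ
        {q | ∃ g ∈ G, ∃ k : Fin n →₀ ℕ,
          q = monomial k (1:ℂ) * g ∧ q.totalDegree ≤ D'} := by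
  classical
  have main : ∀ m : Fin n →₀ ℕ, ∀ f, f ∈ I → IsLeadingMonomial f m → f.totalDegree ≤ D' →
      f ∈ Submodule.span ℂ
        {q | ∃ g ∈ G, ∃ k : Fin n →₀ ℕ,
          q = monomial k (1:ℂ) * g ∧ q.totalDegree ≤ D'} := by
    intro m
    induction m using drl_wf.induction with
    | _ m IH =>
      intro f hfI hflm hfD
      have hf0 : f ≠ 0 := by
        intro h
        rw [h] at hflm
        simpa using hflm.1
      obtain ⟨g, hgG, mg, mf, hglm, hflm', hle⟩ := hdiv f hfI hf0
      have hmf : mf = m := lm_unique hflm' hflm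
      subst hmf
      obtain ⟨mg', hglm', hg1⟩ := hmonic g hgG
      have hmg : mg' = mg := lm_unique hglm' hglm
      subst hmg
      have hgle : mg' ≤ mf := Finsupp.le_def.mpr hle
      set k := mf - mg' with hk
      obtain ⟨hqlm, hqc⟩ := lm_monomial_mul (g := g) k hglm
      have hkm : k + mg' = mf := tsub_add_cancel_of_le hgle
      rw [hkm] at hqlm hqc
      rw [hg1] at hqc
      set q : MvPolynomial (Fin n) ℂ := monomial k (1:ℂ) * g with hqdef
      have hqD : q.totalDegree ≤ D' := by
        rw [deg_lm hqlm, ← deg_lm hflm]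
        exact hfD
      have hqS : q ∈ {q | ∃ g ∈ G, ∃ k : Fin n →₀ ℕ,
          q = monomial k (1:ℂ) * g ∧ q.totalDegree ≤ D'} := ⟨g, hgG, k, rfl, hqD⟩
      set c := f.coeff mf with hc
      set f' := f - c • q with hf'
      have hqI : c • q ∈ I := by
        rw [smul_eq_C_mul]
        exact I.mul_mem_left _ (I.mul_mem_left _ (hGI g hgG))
      have hcf' : f'.coeff mf = 0 := by
        rw [hf', coeff_sub, coeff_smul, hqc, smul_eq_mul, mul_one, hc, sub_self]
      have hsupp : ∀ m'' ∈ f'.support, DrlLt m'' mf := by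
        intro m'' hm''
        have hne : m'' ≠ mf := by
          rintro rfl
          exact mem_support_iff.mp hm'' hcf'
        have h1 := support_sub _ f (c • q) hm''
        rcases Finset.mem_union.mp h1 with h2 | h2
        · exact hflm.2 m'' h2 hne
        · exact hqlm.2 m'' (support_smul h2) hne
      have hfeq : f = f' + c • q := by
        rw [hf']
        ring
      by_cases hf'0 : f' = 0
      · rw [hfeq, hf'0, zero_add]
        exact Submodule.smul_mem _ c (Submodule.subset_span hqS)
      · obtain ⟨m', hm'⟩ := exists_lm hf'0
        have hm'lt : DrlLt m' mf := hsupp m' hm'.1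
        have hf'I : f' ∈ I := I.sub_mem hfI hqI
        have hf'D : f'.totalDegree ≤ D' := by
          rw [deg_lm hm']
          exact le_trans (drl_deg_le hm'lt) (by rw [← deg_lm hflm]; exact hfD)
        have hspan := IH m' hm'lt f' hf'I hm' hf'D
        rw [hfeq]
        exact Submodule.add_mem _ hspan (Submodule.smul_mem _ c (Submodule.subset_span hqS))
  intro f hfI hfD
  by_cases hf0 : f = 0
  · rw [hf0]
    exact Submodule.zero_mem _
  · obtain ⟨m, hm⟩ := exists_lm hf0
    exact main m f hfI hm hfD

theorem exists_reducedGB (I : Ideal (MvPolynomial (Fin n) ℂ)) :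
    ∃ G : Finset (MvPolynomial (Fin n) ℂ), IsReducedGB I G := by
  classical
  choose NF hNF1 hNF2 hNF3 using nf_exists I
  set M : Finset (Fin n →₀ ℕ) := (minLM_finite I).toFinset with hM
  set G : Finset (MvPolynomial (Fin n) ℂ) := M.image (fun m => monomial m (1:ℂ) - NF m)
    with hG
  have hlm : ∀ m ∈ lmSet I,
      IsLeadingMonomial (monomial m (1:ℂ) - NF m) m ∧
        (monomial m (1:ℂ) - NF m).coeff m = 1 := by
    intro m hm
    have hnm : m ∉ (NF m).support := fun h => hNF2 m m h hm
    have hc : (monomial m (1:ℂ) - NF m).coeff m = 1 := by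
      rw [coeff_sub, coeff_monomial, if_pos rfl, notMem_support_iff.mp hnm, sub_zero]
    refine ⟨⟨mem_support_iff.mpr (by rw [hc]; exact one_ne_zero), ?_⟩, hc⟩
    intro m' hm' hne
    have h1 := support_sub _ (monomial m (1:ℂ)) (NF m) hm'
    rcases Finset.mem_union.mp h1 with h2 | h2
    · rw [mem_support_iff, coeff_monomial] at h2
      rcases em (m = m') with rfl | h3
      · exact absurd rfl hne
      · rw [if_neg h3] at h2
        exact absurd rfl h2
    · rcases hNF3 m m' h2 with rfl | h3
      · exact absurd rfl hne
      · exact h3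
  have hGI : ∀ g ∈ G, g ∈ I := by
    intro g hg
    obtain ⟨m, hmM, rfl⟩ := Finset.mem_image.mp hg
    exact hNF1 m
  have hdiv : ∀ f ∈ I, f ≠ (0 : MvPolynomial (Fin n) ℂ) →
      ∃ g ∈ G, ∃ mg mf : Fin n →₀ ℕ,
        IsLeadingMonomial g mg ∧ IsLeadingMonomial f mf ∧ ∀ i, mg i ≤ mf i := by
    intro f hfI hf0
    obtain ⟨mf, hmf⟩ := exists_lm hf0
    have hls : mf ∈ lmSet I := ⟨f, hfI, hf0, hmf⟩
    obtain ⟨m₀, hm₀, hle⟩ := exists_min_le mf hls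
    refine ⟨monomial m₀ (1:ℂ) - NF m₀,
      Finset.mem_image_of_mem _ ((minLM_finite I).mem_toFinset.mpr hm₀), m₀, mf,
      (hlm m₀ hm₀.1).1, hmf, fun i => Finsupp.le_def.mp hle i⟩
  have hmonic : ∀ g ∈ G, ∃ mg, IsLeadingMonomial g mg ∧ g.coeff mg = 1 := by
    intro g hg
    obtain ⟨m, hmM, rfl⟩ := Finset.mem_image.mp hg
    have hm : m ∈ minLM I := (minLM_finite I).mem_toFinset.mp hmM
    exact ⟨m, (hlm m hm.1).1, (hlm m hm.1).2⟩
  have hspan : Ideal.span (G : Set (MvPolynomial (Fin n) ℂ)) = I := by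
    apply le_antisymm
    · rw [Ideal.span_le]
      intro g hg
      exact hGI g hg
    · intro f hf
      have h1 := reduce_span hGI hmonic hdiv f.totalDegree f hf le_rfl
      have h2 : {q : MvPolynomial (Fin n) ℂ | ∃ g ∈ G, ∃ k : Fin n →₀ ℕ,
          q = monomial k (1:ℂ) * g ∧ q.totalDegree ≤ f.totalDegree} ⊆
          ((Ideal.span (G : Set (MvPolynomial (Fin n) ℂ))).restrictScalars ℂ : Set _) := by
        rintro q ⟨g, hgG, k, rfl, -⟩
        exact Ideal.mul_mem_left _ _ (Ideal.subset_span hgG)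
      exact Submodule.span_le.mpr h2 h1
  refine ⟨G, ⟨fun g hg => hGI g hg, hspan, hdiv⟩, ?_⟩
  intro g hg
  obtain ⟨m₀, hmM, rfl⟩ := Finset.mem_image.mp hg
  have hm₀ : m₀ ∈ minLM I := (minLM_finite I).mem_toFinset.mp hmM
  refine ⟨m₀, (hlm m₀ hm₀.1).1, (hlm m₀ hm₀.1).2, ?_⟩
  intro m hm g' hg' hne mg' hlmg' hdvd
  obtain ⟨m₁, hm₁M, rfl⟩ := Finset.mem_image.mp hg'
  have hm₁ : m₁ ∈ minLM I := (minLM_finite I).mem_toFinset.mp hm₁M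
  have hmg' : mg' = m₁ := lm_unique hlmg' (hlm m₁ hm₁.1).1
  subst hmg'
  have hle : mg' ≤ m := Finsupp.le_def.mpr hdvd
  have h1 := support_sub _ (monomial m₀ (1:ℂ)) (NF m₀) hm
  rcases Finset.mem_union.mp h1 with h2 | h2
  · rw [mem_support_iff, coeff_monomial] at h2
    rcases em (m₀ = m) with rfl | h3
    · have : mg' = m₀ := hm₀.2 mg' hm₁.1 hle
      exact hne (by rw [this])
    · rw [if_neg h3] at h2
      exact absurd rfl h2
  · exact hNF2 m₀ m h2 (lmSet_upclosed hm₁.1 hle)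

end Drl

namespace Drl

variable {n : ℕ}

noncomputable def Lfun (v : (Fin n →₀ ℕ) → ℂ) : MvPolynomial (Fin n) ℂ →ₗ[ℂ] ℂ where
  toFun p := ∑ m ∈ p.support, p.coeff m * v m
  map_add' p q := by
    classical
    have hsub : ∀ r : MvPolynomial (Fin n) ℂ, r.support ⊆ p.support ∪ q.support →
        ∑ m ∈ r.support, r.coeff m * v m = ∑ m ∈ p.support ∪ q.support, r.coeff m * v m := by
      intro r hr
      apply Finset.sum_subset hr
      intro x _ hx
      rw [notMem_support_iff.mp hx, zero_mul]
    rw [hsub (p + q) support_add, hsub p Finset.subset_union_left,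
      hsub q Finset.subset_union_right, ← Finset.sum_add_distrib]
    apply Finset.sum_congr rfl
    intro x _
    rw [coeff_add]
    ring
  map_smul' c p := by
    classical
    simp only [RingHom.id_apply, smul_eq_mul]
    rw [Finset.sum_subset (support_smul (a := c) (f := p))
      (fun x _ hx => by rw [notMem_support_iff.mp hx, zero_mul]), Finset.mul_sum]
    apply Finset.sum_congr rfl
    intro x _
    rw [coeff_smul, smul_eq_mul]
    ring

theorem Lfun_apply (v : (Fin n →₀ ℕ) → ℂ) (p : MvPolynomial (Fin n) ℂ) :
    Lfun v p = ∑ m ∈ p.support, p.coeff m * v m := rfl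

theorem Lfun_monomial (v : (Fin n →₀ ℕ) → ℂ) (m : Fin n →₀ ℕ) :
    Lfun v (monomial m (1:ℂ)) = v m := by
  classical
  rw [Lfun_apply, support_monomial, if_neg (one_ne_zero (α := ℂ)), Finset.sum_singleton,
    coeff_monomial, if_pos rfl, one_mul]

theorem L_mul_f (v : (Fin n →₀ ℕ) → ℂ) (D : ℕ) (f h : MvPolynomial (Fin n) ℂ)
    (hmac : ∀ m : Fin n →₀ ℕ, (∑ i, m i) + f.totalDegree ≤ D →
      Lfun v (monomial m (1:ℂ) * f) = 0)
    (hdeg : (h * f).totalDegree ≤ D) : Lfun v (h * f) = 0 := by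
  by_cases hf : f = 0
  · rw [hf, mul_zero, map_zero]
  by_cases hh : h = 0
  · rw [hh, zero_mul, map_zero]
  have hdeg' : h.totalDegree + f.totalDegree ≤ D := by
    rw [← totalDegree_mul_eq hh hf]
    exact hdeg
  have hsplit : h * f = ∑ m ∈ h.support, monomial m (h.coeff m) * f := by
    rw [← Finset.sum_mul, ← as_sum]
  rw [hsplit, map_sum]
  apply Finset.sum_eq_zero
  intro m hm
  have h1 : monomial m (h.coeff m) * f = h.coeff m • (monomial m (1:ℂ) * f) := by
    rw [smul_eq_C_mul, ← mul_assoc, C_mul_monomial, mul_one]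
  have h2 : (∑ i, m i) ≤ h.totalDegree := by
    rw [← degEq]
    exact le_totalDegree hm
  rw [h1, map_smul, hmac m (by omega), smul_zero]

theorem L_vanish {I : Ideal (MvPolynomial (Fin n) ℂ)} {G : Finset (MvPolynomial (Fin n) ℂ)}
    (hGB : IsReducedGB I G) (v : (Fin n →₀ ℕ) → ℂ) (D : ℕ)
    (hrep : ∀ g ∈ G, ∀ k : Fin n →₀ ℕ, (monomial k (1:ℂ) * g).totalDegree ≤ D →
      Lfun v (monomial k (1:ℂ) * g) = 0) :
    ∀ p ∈ I, p.totalDegree ≤ D → Lfun v p = 0 := by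
  intro p hp hpD
  have hmonic : ∀ g ∈ G, ∃ mg, IsLeadingMonomial g mg ∧ g.coeff mg = 1 := by
    intro g hg
    obtain ⟨mg, h1, h2, -⟩ := hGB.2 g hg
    exact ⟨mg, h1, h2⟩
  have hGI : ∀ g ∈ G, g ∈ I := fun g hg => hGB.1.1 hg
  have hspan := reduce_span hGI hmonic hGB.1.2.2 D p hp hpD
  have hS : {q : MvPolynomial (Fin n) ℂ | ∃ g ∈ G, ∃ k : Fin n →₀ ℕ,
      q = monomial k (1:ℂ) * g ∧ q.totalDegree ≤ D} ⊆
      (LinearMap.ker (Lfun v) : Set (MvPolynomial (Fin n) ℂ)) := by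
    rintro q ⟨g, hg, k, rfl, hdq⟩
    exact LinearMap.mem_ker.mpr (hrep g hg k hdq)
  exact LinearMap.mem_ker.mp (Submodule.span_le.mpr hS hspan)

theorem eval_sum' (x : Fin n → ℂ) (p : MvPolynomial (Fin n) ℂ) :
    eval x p = ∑ m ∈ p.support, p.coeff m * eval x (monomial m (1:ℂ)) := by
  conv_lhs => rw [p.as_sum]
  rw [map_sum]
  apply Finset.sum_congr rfl
  intro m _
  rw [eval_monomial, eval_monomial, one_mul]

end Drl


open Drl

/-- Solutions of the Macaulay linear system: let `I = (F)` be radical with finite zero set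
`{a_1,…,a_w}` and let `D` be at least the complete solving degree of `F` (hypothesis `hD`)
and at least the degrees of the members of `F`. An assignment `v` of values to monomials
(with `v(1) = 1`) satisfies all Macaulay equations in degree `≤ D` iff its restriction to
monomials of degree `≤ D` is an affine combination `Σ η_i m(a_i)` with `Σ η_i = 1`;
coordinates of degree `> D` are unconstrained. -/
theorem macaulay_solutions_are_affine_combinations
    (n w D : ℕ) (F : Finset (MvPolynomial (Fin n) ℂ))
    (hrad : (Ideal.span (F : Set (MvPolynomial (Fin n) ℂ))).IsRadical)
    (a : Fin w → (Fin n → ℂ)) (ha : Function.Injective a)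
    (hV : {x : Fin n → ℂ | ∀ f ∈ F, eval x f = 0} = Set.range a)
    (hDdeg : ∀ f ∈ F, f.totalDegree ≤ D)
    (hD : ∀ G : Finset (MvPolynomial (Fin n) ℂ),
      IsReducedGB (Ideal.span (F : Set (MvPolynomial (Fin n) ℂ))) G →
      ∀ g ∈ G, ∀ m : Fin n →₀ ℕ,
        (monomial m (1:ℂ) * g).totalDegree ≤ D →
        ∃ h : MvPolynomial (Fin n) ℂ → MvPolynomial (Fin n) ℂ,
          monomial m (1:ℂ) * g = ∑ f ∈ F, h f * f ∧
          ∀ f ∈ F, (h f * f).totalDegree ≤ D)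
    (v : (Fin n →₀ ℕ) → ℂ) :
    (v 0 = 1 ∧ ∀ f ∈ F, ∀ m : Fin n →₀ ℕ,
        (∑ i, m i) + f.totalDegree ≤ D →
        ∑ m' ∈ (monomial m (1:ℂ) * f).support,
          (monomial m (1:ℂ) * f).coeff m' * v m' = 0)
    ↔ ∃ η : Fin w → ℂ, (∑ i, η i) = 1 ∧
        ∀ m : Fin n →₀ ℕ, (∑ i, m i) ≤ D →
          v m = ∑ i, η i * eval (a i) (monomial m (1:ℂ)) := by
  classical
  set I := Ideal.span (F : Set (MvPolynomial (Fin n) ℂ)) with hI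
  have hZL : MvPolynomial.zeroLocus ℂ I = Set.range a := by
    rw [hI, MvPolynomial.zeroLocus_span]
    exact hV
  have hVI : MvPolynomial.vanishingIdeal ℂ (Set.range a) = I := by
    rw [← hZL, MvPolynomial.vanishingIdeal_zeroLocus_eq_radical, hrad.radical]
  constructor
  · rintro ⟨hv0, hmac⟩
    set L := Lfun v with hL
    have hmacL : ∀ f ∈ F, ∀ m : Fin n →₀ ℕ, (∑ i, m i) + f.totalDegree ≤ D →
        L (monomial m (1:ℂ) * f) = 0 := by
      intro f hf m hm
      rw [hL, Lfun_apply]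
      exact hmac f hf m hm
    obtain ⟨G, hGB⟩ := exists_reducedGB I
    have hrep : ∀ g ∈ G, ∀ k : Fin n →₀ ℕ, (monomial k (1:ℂ) * g).totalDegree ≤ D →
        L (monomial k (1:ℂ) * g) = 0 := by
      intro g hg k hk
      obtain ⟨h, hrepr, hdeg⟩ := hD G hGB g hg k hk
      rw [hrepr, map_sum]
      exact Finset.sum_eq_zero fun f hf => L_mul_f v D f (h f) (hmacL f hf) (hdeg f hf)
    have hvanish : ∀ p ∈ I, p.totalDegree ≤ D → L p = 0 := L_vanish hGB v D hrep
    set W := restrictTotalDegree (Fin n) ℂ D with hW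
    set E : W →ₗ[ℂ] (Fin w → ℂ) :=
      { toFun := fun p i => eval (a i) p.1
        map_add' := fun p q => by funext i; exact map_add (eval (a i)) p.1 q.1
        map_smul' := fun c p => by funext i; simp [smul_eval] } with hE
    set L' : W →ₗ[ℂ] ℂ := L.comp W.subtype with hL'
    have hkerle : LinearMap.ker E ≤ LinearMap.ker L' := by
      intro p hp
      rw [LinearMap.mem_ker] at hp ⊢
      have hpI : (p : MvPolynomial (Fin n) ℂ) ∈ I := by
        rw [← hVI]
        rw [mem_vanishingIdeal_iff]
        rintro x ⟨i, rfl⟩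
        have h2 := congrFun hp i
        simpa [hE] using h2
      exact hvanish _ hpI ((mem_restrictTotalDegree (Fin n) D ((p : W) : MvPolynomial (Fin n) ℂ)).mp p.2)
    set ψ : ↥(LinearMap.range E) →ₗ[ℂ] ℂ :=
      (Submodule.liftQ (LinearMap.ker E) L' hkerle).comp
        (E.quotKerEquivRange.symm.toLinearMap) with hψ
    obtain ⟨ηl, hηl⟩ := LinearMap.exists_extend ψ
    have hfact : ∀ p : W, ηl (E p) = L p.1 := by
      intro p
      have h0 : E p ∈ LinearMap.range E := LinearMap.mem_range_self E p
      have h1 : (⟨E p, h0⟩ : LinearMap.range E) =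
          E.quotKerEquivRange (Submodule.Quotient.mk p) :=
        Subtype.ext (LinearMap.quotKerEquivRange_apply_mk E p).symm
      have h3 : E.quotKerEquivRange.symm ⟨E p, h0⟩ = Submodule.Quotient.mk p := by
        rw [h1, LinearEquiv.symm_apply_apply]
      calc ηl (E p) = ηl ((LinearMap.range E).subtype ⟨E p, h0⟩) := rfl
        _ = ψ ⟨E p, h0⟩ := by rw [← LinearMap.comp_apply, hηl]
        _ = Submodule.liftQ (LinearMap.ker E) L' hkerle
              (E.quotKerEquivRange.symm ⟨E p, h0⟩) := rfl
        _ = Submodule.liftQ (LinearMap.ker E) L' hkerle (Submodule.Quotient.mk p) := by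
              rw [h3]
        _ = L' p := Submodule.liftQ_apply _ _ _
        _ = L p.1 := rfl
    set η : Fin w → ℂ := fun i => ηl (fun j => if i = j then 1 else 0) with hη
    have hform : ∀ m : Fin n →₀ ℕ, (∑ i, m i) ≤ D →
        v m = ∑ i, η i * eval (a i) (monomial m (1:ℂ)) := by
      intro m hm
      have hmW : (monomial m (1:ℂ)) ∈ W := by
        rw [hW, mem_restrictTotalDegree, totalDegree_monomial _ (one_ne_zero (α := ℂ)), degEq]
        exact hm
      have h2 := hfact ⟨monomial m (1:ℂ), hmW⟩
      have h1 : L (monomial m (1:ℂ)) = v m := Lfun_monomial v m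
      rw [show ((⟨monomial m (1:ℂ), hmW⟩ : W) : MvPolynomial (Fin n) ℂ)
        = monomial m (1:ℂ) from rfl, h1] at h2
      rw [← h2, LinearMap.pi_apply_eq_sum_univ ηl]
      apply Finset.sum_congr rfl
      intro i _
      have : E ⟨monomial m (1:ℂ), hmW⟩ i = eval (a i) (monomial m (1:ℂ)) := rfl
      rw [this, smul_eq_mul, mul_comm]
    refine ⟨η, ?_, hform⟩
    have h0 := hform 0 (by simp)
    rw [hv0] at h0
    rw [show (monomial (0 : Fin n →₀ ℕ) (1:ℂ)) = 1 by rw [monomial_zero', C_1]] at h0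
    simp only [map_one, mul_one] at h0
    exact h0.symm
  · rintro ⟨η, hη1, hηform⟩
    have hroot : ∀ f ∈ F, ∀ i, eval (a i) f = 0 := by
      intro f hf i
      have h1 : a i ∈ {x : Fin n → ℂ | ∀ f ∈ F, eval x f = 0} := by
        rw [hV]
        exact Set.mem_range_self i
      exact h1 f hf
    constructor
    · have h0 := hηform 0 (by simp)
      rw [show (monomial (0 : Fin n →₀ ℕ) (1:ℂ)) = 1 by rw [monomial_zero', C_1]] at h0
      simp only [map_one, mul_one] at h0
      rw [h0, hη1]
    · intro f hf m hm
      have hbound : ∀ m'' ∈ (monomial m (1:ℂ) * f).support, (∑ i, m'' i) ≤ D := by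
        intro m'' hm''
        have h1 : (m''.sum fun _ e => e) ≤ (monomial m (1:ℂ) * f).totalDegree :=
          le_totalDegree hm''
        rw [degEq] at h1
        have h2 := totalDegree_mul (monomial m (1:ℂ)) f
        rw [totalDegree_monomial _ (one_ne_zero (α := ℂ)), degEq] at h2
        omega
      calc ∑ m'' ∈ (monomial m (1:ℂ) * f).support,
              (monomial m (1:ℂ) * f).coeff m'' * v m''
          = ∑ m'' ∈ (monomial m (1:ℂ) * f).support, ∑ i,
              (monomial m (1:ℂ) * f).coeff m'' *
                (η i * eval (a i) (monomial m'' (1:ℂ))) := by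
            apply Finset.sum_congr rfl
            intro m'' hm''
            rw [hηform m'' (hbound m'' hm''), Finset.mul_sum]
        _ = ∑ i, ∑ m'' ∈ (monomial m (1:ℂ) * f).support,
              (monomial m (1:ℂ) * f).coeff m'' *
                (η i * eval (a i) (monomial m'' (1:ℂ))) := Finset.sum_comm
        _ = ∑ i, η i * eval (a i) (monomial m (1:ℂ) * f) := by
            apply Finset.sum_congr rfl
            intro i _
            rw [eval_sum' (a i) (monomial m (1:ℂ) * f), Finset.mul_sum]
            apply Finset.sum_congr rfl
            intro m'' _
            ring
        _ = 0 := by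
            apply Finset.sum_eq_zero
            intro i _
            rw [map_mul, hroot f hf i, mul_zero, mul_zero]
end
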